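/- arXiv:2504.02238 — 10 statements merged into one kernel-verified Lean document; each statement's English description precedes it below -/
import Mathlib

section
/- Greater confidence in the signal brings the average posterior mean closer to the state (Proposition 2). Let f_X be a log-concave density symmetric about its mean μ, let f_ε be a quasi-concave density symmetric about 0 (the objective noise density), and let f_A and f_B be quasi-concave densities symmetric about 0 (subjective noise densities) such that f_B is less precise than f_A (agent A is more confident than B). For i ∈ {A,B}, define the subjective posterior mean m_i(s) := (∫ x·f_X(x)·f_i(s−x) dx)/(∫ f_X(x)·f_i(s−x) dx). Then for every x ≥ μ: x ≥ ∫ m_A(s)·f_ε(s−x) ds ≥ ∫ m_B(s)·f_ε(s−x) ds ≥ μ, and for every x ≤ μ: x ≤ ∫ m_A(s)·f_ε(s−x) ds ≤ ∫ m_B(s)·f_ε(s−x) ds ≤ μ. -/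
open MeasureTheory Real Set

noncomputable section

/-- A density: everywhere positive, continuously differentiable, integrates to 1,
with finite first absolute moment. -/
def IsDensity (f : ℝ → ℝ) : Prop :=
  (∀ x, 0 < f x) ∧ ContDiff ℝ 1 f ∧ (∫ x, f x) = 1 ∧
    MeasureTheory.Integrable (fun x => |x| * f x)

/-- `f` is symmetric about `m`. -/
def SymmAbout (m : ℝ) (f : ℝ → ℝ) : Prop := ∀ x, f (m + x) = f (m - x)

/-- `f` is quasi-concave. -/
def QuasiConcaveFn (f : ℝ → ℝ) : Prop :=
  ∀ x y t : ℝ, 0 ≤ t → t ≤ 1 → min (f x) (f y) ≤ f (t * x + (1 - t) * y)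

/-- `f` is log-concave. -/
def LogConcaveFn (f : ℝ → ℝ) : Prop := ConcaveOn ℝ Set.univ fun x => Real.log (f x)

/-- `g` is less precise than `f`: the ratio `g/f` is nondecreasing on `(0, ∞)`. -/
def LessPrecise (g f : ℝ → ℝ) : Prop := MonotoneOn (fun x => g x / f x) (Set.Ioi 0)

/-- Posterior mean at signal realization `s` under prior `fX` and noise density `fε`. -/
def postMean (fX fε : ℝ → ℝ) (s : ℝ) : ℝ :=
  (∫ x, x * fX x * fε (s - x)) / (∫ x, fX x * fε (s - x))

namespace OAP

lemma dpos {f : ℝ → ℝ} (h : IsDensity f) (x : ℝ) : 0 < f x := h.1 x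
lemma dcont {f : ℝ → ℝ} (h : IsDensity f) : Continuous f := h.2.1.continuous
lemma dint {f : ℝ → ℝ} (h : IsDensity f) : Integrable f := by
  by_contra hn
  have := h.2.2.1
  rw [integral_undef hn] at this
  exact one_ne_zero this.symm
lemma dmom {f : ℝ → ℝ} (h : IsDensity f) :
    Integrable (fun x => |x| * f x) := h.2.2.2
lemma dxmul {f : ℝ → ℝ} (h : IsDensity f) :
    Integrable (fun x => x * f x) := by
  refine h.2.2.2.mono ?_ ?_
  · exact (continuous_id.mul (dcont h)).aestronglyMeasurable
  · filter_upwards with x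
    simp [abs_mul, abs_nonneg, abs_abs]

lemma symm_eq {f : ℝ → ℝ} {m : ℝ} (h : SymmAbout m f) (x : ℝ) : f (2*m - x) = f x := by
  have := h (x - m)
  rw [show m + (x - m) = x by ring, show m - (x - m) = 2*m - x by ring] at this
  exact this.symm

lemma even_of_symm0 {f : ℝ → ℝ} (h : SymmAbout 0 f) (x : ℝ) : f (-x) = f x := by
  simpa using symm_eq h x

/-- quasi-concave + symmetric about 0 ⇒ nonincreasing in |·| -/
lemma qc_anti {f : ℝ → ℝ} (hsym : SymmAbout 0 f) (hqc : QuasiConcaveFn f)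
    {u v : ℝ} (h : |u| ≤ |v|) : f v ≤ f u := by
  rcases eq_or_lt_of_le (abs_nonneg v) with hv | hv
  · have hu : u = 0 := abs_eq_zero.mp (le_antisymm (by rw [← hv] at h; exact h) (abs_nonneg u))
    have hv0 : v = 0 := abs_eq_zero.mp hv.symm
    rw [hu, hv0]
  · set b := |v| with hb
    have hfv : f v = f b := by
      rcases abs_cases v with ⟨h1, _⟩ | ⟨h1, _⟩
      · rw [hb, h1]
      · rw [hb, h1, even_of_symm0 hsym]
    have hfu : f u = f |u| := by
      rcases abs_cases u with ⟨h1, _⟩ | ⟨h1, _⟩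
      · rw [h1]
      · rw [h1, even_of_symm0 hsym]
    rw [hfv, hfu]
    set a := |u|
    have ha : 0 ≤ a := abs_nonneg u
    set t := (a + b) / (2 * b) with ht
    have h1 : 0 ≤ t := by positivity
    have h2 : t ≤ 1 := by
      rw [ht, div_le_one (by linarith)]
      linarith
    have key := hqc b (-b) t h1 h2
    have : t * b + (1 - t) * (-b) = a := by
      field_simp [ht]
      have htb : t * (2 * b) = a + b := by rw [ht]; exact div_mul_cancel₀ _ (mul_pos two_pos hv).ne'
      linarith
    rw [this] at key
    rw [even_of_symm0 hsym] at key
    simpa using key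
lemma lc_pair {fX : ℝ → ℝ} {μ : ℝ} (hpos : ∀ x, 0 < fX x) (hsym : SymmAbout μ fX)
    (hlc : LogConcaveFn fX) (d : ℝ) {c c' : ℝ} (h : |c - μ| ≤ |c' - μ|) :
    fX (c' + d) * fX (c' - d) ≤ fX (c + d) * fX (c - d) := by
  set φ : ℝ → ℝ := fun t => Real.log (fX (μ + t + d)) + Real.log (fX (μ + t - d)) with hφ
  have heven : ∀ t, φ (-t) = φ t := by
    intro t
    have h1 : fX (μ + -t + d) = fX (μ + t - d) := by
      have := hsym (t - d)
      rw [show μ + -t + d = μ - (t - d) by ring, ← this, show μ + (t - d) = μ + t - d by ring]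
    have h2 : fX (μ + -t - d) = fX (μ + t + d) := by
      have := hsym (t + d)
      rw [show μ + -t - d = μ - (t + d) by ring, ← this, show μ + (t + d) = μ + t + d by ring]
    simp only [hφ, h1, h2]
    ring
  have hmono : ∀ a b : ℝ, 0 ≤ a → a ≤ b → φ b ≤ φ a := by
    intro a b ha hab
    rcases eq_or_lt_of_le (ha.trans hab) with hb | hb
    · have : a = b := le_antisymm hab (hb.symm ▸ ha)
      rw [this]
    · set θ := (a + b) / (2 * b) with hθ
      have hθ0 : 0 ≤ θ := by positivity
      have hθ1 : 1 - θ ≥ 0 := by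
        rw [hθ]
        rw [ge_iff_le, sub_nonneg, div_le_one (by linarith)]
        linarith
      have hsum : θ + (1 - θ) = 1 := by ring
      have hcomb1 : θ • (μ + b + d) + (1 - θ) • (μ - b + d) = μ + a + d := by
        simp only [smul_eq_mul]
        field_simp [hθ]
        have htb : θ * (2 * b) = a + b := by rw [hθ]; exact div_mul_cancel₀ _ (mul_pos two_pos hb).ne'
        linarith
      have hcomb2 : θ • (μ + b - d) + (1 - θ) • (μ - b - d) = μ + a - d := by
        simp only [smul_eq_mul]
        field_simp [hθ]
        have htb : θ * (2 * b) = a + b := by rw [hθ]; exact div_mul_cancel₀ _ (mul_pos two_pos hb).ne'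
        linarith
      have k1 := hlc.2 (Set.mem_univ (μ + b + d)) (Set.mem_univ (μ - b + d)) hθ0 hθ1 hsum
      have k2 := hlc.2 (Set.mem_univ (μ + b - d)) (Set.mem_univ (μ - b - d)) hθ0 hθ1 hsum
      rw [hcomb1] at k1
      rw [hcomb2] at k2
      simp only [smul_eq_mul] at k1 k2
      have he := heven b
      simp only [hφ] at he k1 k2 ⊢
      have e1 : μ + -b + d = μ - b + d := by ring
      have e2 : μ + -b - d = μ - b - d := by ring
      rw [e1, e2] at he
      nlinarith [k1, k2, he]
  have habs : ∀ t : ℝ, φ t = φ |t| := by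
    intro t
    rcases abs_cases t with ⟨h1, _⟩ | ⟨h1, _⟩
    · rw [h1]
    · rw [h1, heven]
  have key : φ (c' - μ) ≤ φ (c - μ) := by
    rw [habs (c' - μ), habs (c - μ)]
    exact hmono _ _ (abs_nonneg _) h
  simp only [hφ] at key
  have e1 : μ + (c' - μ) + d = c' + d := by ring
  have e2 : μ + (c' - μ) - d = c' - d := by ring
  have e3 : μ + (c - μ) + d = c + d := by ring
  have e4 : μ + (c - μ) - d = c - d := by ring
  rw [e1, e2, e3, e4] at key
  have := Real.exp_le_exp.mpr key
  rwa [Real.exp_add, Real.exp_add, Real.exp_log (hpos _), Real.exp_log (hpos _),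
    Real.exp_log (hpos _), Real.exp_log (hpos _)] at this

lemma lc_anti {fX : ℝ → ℝ} {μ : ℝ} (hpos : ∀ x, 0 < fX x) (hsym : SymmAbout μ fX)
    (hlc : LogConcaveFn fX) {u v : ℝ} (h : |u - μ| ≤ |v - μ|) : fX v ≤ fX u := by
  have := lc_pair hpos hsym hlc 0 h
  simp only [add_zero, sub_zero] at this
  nlinarith [hpos u, hpos v]

lemma refl_integral (g : ℝ → ℝ) (c : ℝ) : ∫ x, g (c - x) = ∫ x, g x :=
  integral_sub_left_eq_self g volume c

lemma refl_integrable {g : ℝ → ℝ} (hg : Integrable g) (c : ℝ) :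
    Integrable (fun x => g (c - x)) := hg.comp_sub_left c

lemma pair_nonneg {g : ℝ → ℝ} (hg : Integrable g) (c : ℝ)
    (h : ∀ x, 0 ≤ g x + g (c - x)) : 0 ≤ ∫ x, g x := by
  have h2 : 0 ≤ ∫ x, (g x + g (c - x)) := integral_nonneg h
  rw [integral_add hg (refl_integrable hg c), refl_integral g c] at h2
  linarith

lemma pair_nonpos {g : ℝ → ℝ} (hg : Integrable g) (c : ℝ)
    (h : ∀ x, g x + g (c - x) ≤ 0) : (∫ x, g x) ≤ 0 := by
  have h2 := pair_nonneg hg.neg c (g := fun x => -g x) (fun x => by have := h x; show 0 ≤ -g x + -g (c - x); linarith)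
  simp only [integral_neg] at h2
  linarith

section Chunk3
variable {fX f : ℝ → ℝ} {μ : ℝ}

lemma qc_bdd (hs : SymmAbout 0 f) (hqc : QuasiConcaveFn f) (x : ℝ) : f x ≤ f 0 :=
  qc_anti hs hqc (by simp)

lemma den_int (hfX : IsDensity fX) (hf : IsDensity f) (hs : SymmAbout 0 f)
    (hqc : QuasiConcaveFn f) (s : ℝ) : Integrable fun x => fX x * f (s - x) := by
  refine ((dint hfX).const_mul (f 0)).mono ?_ ?_
  · exact ((dcont hfX).mul ((dcont hf).comp (continuous_const.sub continuous_id))).aestronglyMeasurable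
  · filter_upwards with x
    have h1 : 0 < fX x := hfX.1 x
    have h2 : 0 < f (s - x) := hf.1 _
    have h3 : f (s - x) ≤ f 0 := qc_bdd hs hqc _
    have h0 : 0 < f 0 := hf.1 0
    rw [Real.norm_eq_abs, Real.norm_eq_abs, abs_of_pos (mul_pos h1 h2),
      abs_of_pos (mul_pos h0 h1)]
    nlinarith

lemma den_pos (hfX : IsDensity fX) (hf : IsDensity f) (hs : SymmAbout 0 f)
    (hqc : QuasiConcaveFn f) (s : ℝ) : 0 < ∫ x, fX x * f (s - x) := by
  rw [integral_pos_iff_support_of_nonneg_ae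
    (Filter.Eventually.of_forall fun x => le_of_lt (mul_pos (hfX.1 x) (hf.1 _)))
    (den_int hfX hf hs hqc s)]
  have : Function.support (fun x => fX x * f (s - x)) = Set.univ :=
    Set.eq_univ_of_forall fun x => (mul_pos (hfX.1 x) (hf.1 _)).ne'
  rw [this]
  simp

lemma num_int (hfX : IsDensity fX) (hf : IsDensity f) (hs : SymmAbout 0 f)
    (hqc : QuasiConcaveFn f) (s : ℝ) : Integrable fun x => x * fX x * f (s - x) := by
  refine ((dmom hfX).const_mul (f 0)).mono ?_ ?_
  · exact ((continuous_id.mul (dcont hfX)).mul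
      ((dcont hf).comp (continuous_const.sub continuous_id))).aestronglyMeasurable
  · filter_upwards with x
    have h1 : 0 < fX x := hfX.1 x
    have h2 : 0 < f (s - x) := hf.1 _
    have h3 : f (s - x) ≤ f 0 := qc_bdd hs hqc _
    have h0 : 0 < f 0 := hf.1 0
    rw [Real.norm_eq_abs, Real.norm_eq_abs, abs_mul, abs_mul,
      abs_of_pos h1, abs_of_pos h2, abs_of_nonneg (by positivity : (0:ℝ) ≤ f 0 * (|x| * fX x))]
    have := mul_le_mul_of_nonneg_left h3 (by positivity : (0:ℝ) ≤ |x| * fX x)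
    nlinarith

lemma numc_int (hfX : IsDensity fX) (hf : IsDensity f) (hs : SymmAbout 0 f)
    (hqc : QuasiConcaveFn f) (s c : ℝ) :
    Integrable fun x => (x - c) * (fX x * f (s - x)) := by
  have := (num_int hfX hf hs hqc s).sub ((den_int hfX hf hs hqc s).const_mul c)
  refine this.congr ?_
  filter_upwards with x
  simp only [Pi.sub_apply]
  ring

lemma numc_eq (hfX : IsDensity fX) (hf : IsDensity f) (hs : SymmAbout 0 f)
    (hqc : QuasiConcaveFn f) (s c : ℝ) :
    (∫ x, (x - c) * (fX x * f (s - x))) =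
      (∫ x, x * fX x * f (s - x)) - c * ∫ x, fX x * f (s - x) := by
  rw [← integral_const_mul, ← integral_sub (num_int hfX hf hs hqc s)
    ((den_int hfX hf hs hqc s).const_mul c)]
  congr 1
  funext x
  ring

lemma postMean_sub (hfX : IsDensity fX) (hf : IsDensity f) (hs : SymmAbout 0 f)
    (hqc : QuasiConcaveFn f) (s c : ℝ) :
    postMean fX f s - c =
      (∫ x, (x - c) * (fX x * f (s - x))) / (∫ x, fX x * f (s - x)) := by
  have hD := den_pos hfX hf hs hqc s
  rw [numc_eq hfX hf hs hqc s c, postMean]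
  field_simp

end Chunk3
section Chunk4
variable {fX f : ℝ → ℝ} {μ : ℝ}

/-- For s ≥ μ, the numerator ∫ (x-μ)·fX·f(s-x) is nonnegative. -/
lemma numer_nonneg (hfX : IsDensity fX) (hXs : SymmAbout μ fX)
    (hf : IsDensity f) (hs : SymmAbout 0 f) (hqc : QuasiConcaveFn f)
    {s : ℝ} (hμs : μ ≤ s) : 0 ≤ ∫ x, (x - μ) * (fX x * f (s - x)) := by
  refine pair_nonneg (numc_int hfX hf hs hqc s μ) (2 * μ) ?_
  intro x
  have hfXr : fX (2 * μ - x) = fX x := symm_eq hXs x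
  rw [hfXr]
  rcases le_total μ x with hx | hx
  · have hb : f (s - (2 * μ - x)) ≤ f (s - x) := by
      refine qc_anti hs hqc ?_
      rw [abs_of_nonneg (by linarith : (0:ℝ) ≤ s - (2 * μ - x))]
      exact abs_le.mpr ⟨by linarith, by linarith⟩
    have key := mul_nonneg (mul_nonneg (sub_nonneg.mpr hx) (hfX.1 x).le) (sub_nonneg.mpr hb)
    nlinarith [key]
  · have hb : f (s - x) ≤ f (s - (2 * μ - x)) := by
      refine qc_anti hs hqc ?_
      rw [abs_of_nonneg (by linarith : (0:ℝ) ≤ s - x)]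
      exact abs_le.mpr ⟨by linarith, by linarith⟩
    have key := mul_nonneg (mul_nonneg (sub_nonneg.mpr hx) (hfX.1 x).le) (sub_nonneg.mpr hb)
    nlinarith [key]

/-- For s ≥ μ, the numerator ∫ (x-s)·fX·f(s-x) is nonpositive. -/
lemma numer_nonpos (hfX : IsDensity fX) (hXs : SymmAbout μ fX) (hXlc : LogConcaveFn fX)
    (hf : IsDensity f) (hs : SymmAbout 0 f) (hqc : QuasiConcaveFn f)
    {s : ℝ} (hμs : μ ≤ s) : (∫ x, (x - s) * (fX x * f (s - x))) ≤ 0 := by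
  refine pair_nonpos (numc_int hfX hf hs hqc s s) (2 * s) ?_
  intro x
  have hfr : f (s - (2 * s - x)) = f (s - x) := by
    rw [show s - (2 * s - x) = -(s - x) by ring, even_of_symm0 hs]
  rw [hfr]
  rcases le_total s x with hx | hx
  · have hb : fX x ≤ fX (2 * s - x) := by
      refine lc_anti hfX.1 hXs hXlc ?_
      rw [abs_of_nonneg (by linarith : (0:ℝ) ≤ x - μ)]
      exact abs_le.mpr ⟨by linarith, by linarith⟩
    have key := mul_nonneg (mul_nonneg (sub_nonneg.mpr hx) (hf.1 (s - x)).le) (sub_nonneg.mpr hb)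
    nlinarith [key]
  · have hb : fX (2 * s - x) ≤ fX x := by
      refine lc_anti hfX.1 hXs hXlc ?_
      rw [abs_of_nonneg (by linarith : (0:ℝ) ≤ 2 * s - x - μ)]
      exact abs_le.mpr ⟨by linarith, by linarith⟩
    have key := mul_nonneg (mul_nonneg (sub_nonneg.mpr hx) (hf.1 (s - x)).le) (sub_nonneg.mpr hb)
    nlinarith [key]

lemma den_refl (hfX : IsDensity fX) (hXs : SymmAbout μ fX)
    (hf : IsDensity f) (hs : SymmAbout 0 f) (s : ℝ) :
    (∫ x, fX x * f ((2 * μ - s) - x)) = ∫ x, fX x * f (s - x) := by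
  rw [← refl_integral (fun x => fX x * f ((2 * μ - s) - x)) (2 * μ)]
  congr 1
  funext x
  rw [symm_eq hXs x, show (2 * μ - s) - (2 * μ - x) = -(s - x) by ring, even_of_symm0 hs]

lemma num_refl (hfX : IsDensity fX) (hXs : SymmAbout μ fX)
    (hf : IsDensity f) (hs : SymmAbout 0 f) (hqc : QuasiConcaveFn f) (s : ℝ) :
    (∫ x, x * fX x * f ((2 * μ - s) - x)) =
      2 * μ * (∫ x, fX x * f (s - x)) - ∫ x, x * fX x * f (s - x) := by
  rw [← refl_integral (fun x => x * fX x * f ((2 * μ - s) - x)) (2 * μ)]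
  have he : (fun x => (2 * μ - x) * fX (2 * μ - x) * f ((2 * μ - s) - (2 * μ - x)))
      = fun x => 2 * μ * (fX x * f (s - x)) - x * fX x * f (s - x) := by
    funext x
    rw [symm_eq hXs x, show (2 * μ - s) - (2 * μ - x) = -(s - x) by ring, even_of_symm0 hs]
    ring
  rw [show (fun x => (fun y => y * fX y * f ((2 * μ - s) - y)) (2 * μ - x))
      = fun x => (2 * μ - x) * fX (2 * μ - x) * f ((2 * μ - s) - (2 * μ - x)) from rfl, he,
    integral_sub (((den_int hfX hf hs hqc s).const_mul (2 * μ))) (num_int hfX hf hs hqc s),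
    integral_const_mul]

/-- Antisymmetry of the posterior mean about μ. -/
lemma postMean_antisym (hfX : IsDensity fX) (hXs : SymmAbout μ fX)
    (hf : IsDensity f) (hs : SymmAbout 0 f) (hqc : QuasiConcaveFn f) (s : ℝ) :
    postMean fX f (2 * μ - s) = 2 * μ - postMean fX f s := by
  have hD := den_pos hfX hf hs hqc s
  rw [postMean, postMean, den_refl hfX hXs hf hs s, num_refl hfX hXs hf hs hqc s]
  field_simp

/-- For s ≥ μ : μ ≤ m(s) ≤ s. -/
lemma postMean_between (hfX : IsDensity fX) (hXs : SymmAbout μ fX) (hXlc : LogConcaveFn fX)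
    (hf : IsDensity f) (hs : SymmAbout 0 f) (hqc : QuasiConcaveFn f)
    {s : ℝ} (hμs : μ ≤ s) : μ ≤ postMean fX f s ∧ postMean fX f s ≤ s := by
  have hD := den_pos hfX hf hs hqc s
  constructor
  · have h1 := postMean_sub hfX hf hs hqc s μ
    have h2 := numer_nonneg hfX hXs hf hs hqc hμs
    have : 0 ≤ postMean fX f s - μ := by
      rw [h1]; exact div_nonneg h2 hD.le
    linarith
  · have h1 := postMean_sub hfX hf hs hqc s s
    have h2 := numer_nonpos hfX hXs hXlc hf hs hqc hμs
    have : postMean fX f s - s ≤ 0 := by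
      rw [h1]; exact div_nonpos_of_nonpos_of_nonneg h2 hD.le
    linarith

/-- Global bound |m(s) - μ| ≤ |s - μ|. -/
lemma postMean_bound (hfX : IsDensity fX) (hXs : SymmAbout μ fX) (hXlc : LogConcaveFn fX)
    (hf : IsDensity f) (hs : SymmAbout 0 f) (hqc : QuasiConcaveFn f) (s : ℝ) :
    |postMean fX f s - μ| ≤ |s - μ| := by
  rcases le_total μ s with h | h
  · obtain ⟨h1, h2⟩ := postMean_between hfX hXs hXlc hf hs hqc h
    rw [abs_of_nonneg (by linarith), abs_of_nonneg (by linarith)]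
    linarith
  · have h' : μ ≤ 2 * μ - s := by linarith
    obtain ⟨h1, h2⟩ := postMean_between hfX hXs hXlc hf hs hqc h'
    have ha := postMean_antisym hfX hXs hf hs hqc s
    rw [ha] at h1 h2
    rw [abs_of_nonpos (by linarith), abs_of_nonpos (by linarith)]
    linarith

/-- Continuity of s ↦ denominator. -/
lemma den_cont (hfX : IsDensity fX) (hf : IsDensity f) (hs : SymmAbout 0 f)
    (hqc : QuasiConcaveFn f) : Continuous fun s => ∫ x, fX x * f (s - x) := by
  refine continuous_of_dominated (bound := fun x => f 0 * fX x) ?_ ?_ ?_ ?_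
  · intro s
    exact ((dcont hfX).mul ((dcont hf).comp (continuous_const.sub continuous_id))).aestronglyMeasurable
  · intro s
    filter_upwards with x
    have h1 : 0 < fX x := hfX.1 x
    have h2 : 0 < f (s - x) := hf.1 _
    have h3 : f (s - x) ≤ f 0 := qc_bdd hs hqc _
    rw [Real.norm_eq_abs, abs_of_pos (mul_pos h1 h2)]
    nlinarith
  · exact (dint hfX).const_mul (f 0)
  · filter_upwards with x
    exact continuous_const.mul ((dcont hf).comp (continuous_sub_right x))

lemma num_cont (hfX : IsDensity fX) (hf : IsDensity f) (hs : SymmAbout 0 f)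
    (hqc : QuasiConcaveFn f) : Continuous fun s => ∫ x, x * fX x * f (s - x) := by
  refine continuous_of_dominated (bound := fun x => f 0 * (|x| * fX x)) ?_ ?_ ?_ ?_
  · intro s
    exact ((continuous_id.mul (dcont hfX)).mul
      ((dcont hf).comp (continuous_const.sub continuous_id))).aestronglyMeasurable
  · intro s
    filter_upwards with x
    have h1 : 0 < fX x := hfX.1 x
    have h2 : 0 < f (s - x) := hf.1 _
    have h3 : f (s - x) ≤ f 0 := qc_bdd hs hqc _
    rw [Real.norm_eq_abs, abs_mul, abs_mul, abs_of_pos h1, abs_of_pos h2]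
    have := mul_le_mul_of_nonneg_left h3 (by positivity : (0:ℝ) ≤ |x| * fX x)
    nlinarith
  · exact (dmom hfX).const_mul (f 0)
  · filter_upwards with x
    exact continuous_const.mul ((dcont hf).comp (continuous_sub_right x))

lemma postMean_cont (hfX : IsDensity fX) (hf : IsDensity f) (hs : SymmAbout 0 f)
    (hqc : QuasiConcaveFn f) : Continuous (postMean fX f) := by
  have h1 := num_cont hfX hf hs hqc
  have h2 := den_cont hfX hf hs hqc
  exact h1.div h2 fun s => (den_pos hfX hf hs hqc s).ne'

end Chunk4
section Chunk5
variable {fX fA fB : ℝ → ℝ} {μ : ℝ}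

lemma symm_abs {g : ℝ → ℝ} (hg : SymmAbout 0 g) (t : ℝ) : g |t| = g t := by
  rcases abs_cases t with ⟨h1, _⟩ | ⟨h1, _⟩
  · rw [h1]
  · rw [h1, even_of_symm0 hg]

lemma ratio_mono (hfA : IsDensity fA) (hAs : SymmAbout 0 fA)
    (hBs : SymmAbout 0 fB) (hconf : LessPrecise fB fA)
    {u v : ℝ} (hu : u ≠ 0) (hv : v ≠ 0) (h : |u| ≤ |v|) :
    fB u * fA v ≤ fB v * fA u := by
  have h1 := hconf (Set.mem_Ioi.mpr (abs_pos.mpr hu)) (Set.mem_Ioi.mpr (abs_pos.mpr hv)) h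
  simp only at h1
  rw [div_le_div_iff₀ (hfA.1 _) (hfA.1 _)] at h1
  rwa [symm_abs hBs, symm_abs hAs, symm_abs hBs, symm_abs hAs] at h1

lemma T_aux (hfX : IsDensity fX) (hXs : SymmAbout μ fX) (hXlc : LogConcaveFn fX)
    (hfA : IsDensity fA) (hAs : SymmAbout 0 fA)
    (hBs : SymmAbout 0 fB) (hconf : LessPrecise fB fA)
    {s x y : ℝ} (hμs : μ ≤ s) (hx : x ≠ s) (hy : y ≠ s) (hxy : y ≤ x) :
    0 ≤ (x - y) * (fX x * fX y - fX (2*s - x) * fX (2*s - y)) *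
      (fA (s - x) * fB (s - y) - fB (s - x) * fA (s - y)) := by
  have hus : s - x ≠ 0 := sub_ne_zero.mpr (Ne.symm hx)
  have hvs : s - y ≠ 0 := sub_ne_zero.mpr (Ne.symm hy)
  rcases le_total (x + y) (2*s) with hc | hc
  · -- below the reflection point: K ≥ 0 and bracket ≥ 0
    have habs : |s - x| ≤ |s - y| :=
      (abs_le.mpr ⟨by linarith, by linarith⟩ : |s - x| ≤ s - y).trans (le_abs_self _)
    have hK : 0 ≤ fA (s - x) * fB (s - y) - fB (s - x) * fA (s - y) := by
      have := ratio_mono hfA hAs hBs hconf hus hvs habs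
      nlinarith [this]
    have habs2 : |(x + y)/2 - μ| ≤ |2*s - (x + y)/2 - μ| :=
      (abs_le.mpr ⟨by linarith, by linarith⟩ : |(x + y)/2 - μ| ≤ 2*s - (x + y)/2 - μ).trans
        (le_abs_self _)
    have hB := lc_pair hfX.1 hXs hXlc ((x - y)/2) habs2
    rw [show (x + y)/2 + (x - y)/2 = x by ring, show (x + y)/2 - (x - y)/2 = y by ring,
      show 2*s - (x + y)/2 + (x - y)/2 = 2*s - y by ring,
      show 2*s - (x + y)/2 - (x - y)/2 = 2*s - x by ring] at hB
    have hB' : 0 ≤ fX x * fX y - fX (2*s - x) * fX (2*s - y) := by nlinarith [hB]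
    have := mul_nonneg (mul_nonneg (sub_nonneg.mpr hxy) hB') hK
    linarith
  · -- above the reflection point: K ≤ 0 and bracket ≤ 0
    have habs : |s - y| ≤ |s - x| := by
      refine (abs_le.mpr ⟨by linarith, by linarith⟩ : |s - y| ≤ x - s).trans ?_
      rw [abs_sub_comm]
      exact le_abs_self _
    have hK : fA (s - x) * fB (s - y) - fB (s - x) * fA (s - y) ≤ 0 := by
      have := ratio_mono hfA hAs hBs hconf hvs hus habs
      nlinarith [this]
    have habs2 : |2*s - (x + y)/2 - μ| ≤ |(x + y)/2 - μ| :=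
      (abs_le.mpr ⟨by linarith, by linarith⟩ : |2*s - (x + y)/2 - μ| ≤ (x + y)/2 - μ).trans
        (le_abs_self _)
    have hB := lc_pair hfX.1 hXs hXlc ((x - y)/2) habs2
    rw [show (x + y)/2 + (x - y)/2 = x by ring, show (x + y)/2 - (x - y)/2 = y by ring,
      show 2*s - (x + y)/2 + (x - y)/2 = 2*s - y by ring,
      show 2*s - (x + y)/2 - (x - y)/2 = 2*s - x by ring] at hB
    have hB' : fX x * fX y - fX (2*s - x) * fX (2*s - y) ≤ 0 := by nlinarith [hB]
    have h12 : (x - y) * (fX x * fX y - fX (2*s - x) * fX (2*s - y)) ≤ 0 :=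
      mul_nonpos_of_nonneg_of_nonpos (sub_nonneg.mpr hxy) hB'
    nlinarith [mul_nonneg (neg_nonneg.2 h12) (neg_nonneg.2 hK)]

lemma T_nonneg (hfX : IsDensity fX) (hXs : SymmAbout μ fX) (hXlc : LogConcaveFn fX)
    (hfA : IsDensity fA) (hAs : SymmAbout 0 fA)
    (hBs : SymmAbout 0 fB) (hconf : LessPrecise fB fA)
    {s x y : ℝ} (hμs : μ ≤ s) (hx : x ≠ s) (hy : y ≠ s) :
    0 ≤ (x - y) * (fX x * fX y - fX (2*s - x) * fX (2*s - y)) *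
      (fA (s - x) * fB (s - y) - fB (s - x) * fA (s - y)) := by
  rcases le_total y x with h | h
  · exact T_aux hfX hXs hXlc hfA hAs hBs hconf hμs hx hy h
  · have := T_aux hfX hXs hXlc hfA hAs hBs hconf hμs hy hx h
    nlinarith [this]

end Chunk5
section Chunk6
variable {fX fA fB : ℝ → ℝ} {μ : ℝ}

lemma compare_num (hfX : IsDensity fX) (hXs : SymmAbout μ fX) (hXlc : LogConcaveFn fX)
    (hfA : IsDensity fA) (hAs : SymmAbout 0 fA) (hAqc : QuasiConcaveFn fA)
    (hfB : IsDensity fB) (hBs : SymmAbout 0 fB) (hBqc : QuasiConcaveFn fB)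
    (hconf : LessPrecise fB fA) {s : ℝ} (hμs : μ ≤ s) :
    (∫ x, (x - μ) * (fX x * fB (s - x))) * (∫ x, fX x * fA (s - x)) ≤
      (∫ x, (x - μ) * (fX x * fA (s - x))) * (∫ x, fX x * fB (s - x)) := by
  set DA := ∫ x, fX x * fA (s - x) with hDA
  set DB := ∫ x, fX x * fB (s - x) with hDB
  set NA := ∫ x, (x - μ) * (fX x * fA (s - x)) with hNA
  set NB := ∫ x, (x - μ) * (fX x * fB (s - x)) with hNB
  set S : ℝ → ℝ → ℝ := fun x y =>
    (x - μ) * fX x * fX y * (fA (s - x) * fB (s - y) - fB (s - x) * fA (s - y)) with hS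
  -- inner integrability in the second variable
  have hFy : ∀ x, Integrable (fun y => S x y) := by
    intro x
    have h12 : Integrable (fun y => ((x - μ) * fX x * fA (s - x)) * (fX y * fB (s - y)) -
        ((x - μ) * fX x * fB (s - x)) * (fX y * fA (s - y))) :=
      ((den_int hfX hfB hBs hBqc s).const_mul _).sub ((den_int hfX hfA hAs hAqc s).const_mul _)
    refine h12.congr (Filter.Eventually.of_forall fun y => ?_)
    simp only [hS]
    ring
  have hGy : ∀ x, Integrable (fun y => S y x) := by
    intro x
    have h12 : Integrable (fun y => (fX x * fB (s - x)) * ((y - μ) * (fX y * fA (s - y))) -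
        (fX x * fA (s - x)) * ((y - μ) * (fX y * fB (s - y)))) :=
      ((numc_int hfX hfA hAs hAqc s μ).const_mul _).sub
        ((numc_int hfX hfB hBs hBqc s μ).const_mul _)
    refine h12.congr (Filter.Eventually.of_forall fun y => ?_)
    simp only [hS]
    ring
  -- closed forms of the inner integrals
  have hF : ∀ x, (∫ y, S x y) =
      ((x - μ) * (fX x * fA (s - x))) * DB - ((x - μ) * (fX x * fB (s - x))) * DA := by
    intro x
    have e : (fun y => S x y) = fun y =>
        ((x - μ) * fX x * fA (s - x)) * (fX y * fB (s - y)) -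
        ((x - μ) * fX x * fB (s - x)) * (fX y * fA (s - y)) := by
      funext y
      simp only [hS]
      ring
    rw [e, integral_sub (((den_int hfX hfB hBs hBqc s).const_mul _))
      (((den_int hfX hfA hAs hAqc s).const_mul _)), integral_const_mul, integral_const_mul]
    ring
  have hG : ∀ x, (∫ y, S y x) =
      (fX x * fB (s - x)) * NA - (fX x * fA (s - x)) * NB := by
    intro x
    have e : (fun y => S y x) = fun y =>
        (fX x * fB (s - x)) * ((y - μ) * (fX y * fA (s - y))) -
        (fX x * fA (s - x)) * ((y - μ) * (fX y * fB (s - y))) := by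
      funext y
      simp only [hS]
      ring
    rw [e, integral_sub (((numc_int hfX hfA hAs hAqc s μ).const_mul _))
      (((numc_int hfX hfB hBs hBqc s μ).const_mul _)), integral_const_mul, integral_const_mul]
  -- outer integrability
  have hFint : Integrable (fun x => ∫ y, S x y) := by
    have h12 : Integrable (fun x => ((x - μ) * (fX x * fA (s - x))) * DB -
        ((x - μ) * (fX x * fB (s - x))) * DA) :=
      ((numc_int hfX hfA hAs hAqc s μ).mul_const _).sub
        ((numc_int hfX hfB hBs hBqc s μ).mul_const _)
    exact h12.congr (Filter.Eventually.of_forall fun x => (hF x).symm)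
  have hGint : Integrable (fun x => ∫ y, S y x) := by
    have h12 : Integrable (fun x => (fX x * fB (s - x)) * NA - (fX x * fA (s - x)) * NB) :=
      ((den_int hfX hfB hBs hBqc s).mul_const _).sub ((den_int hfX hfA hAs hAqc s).mul_const _)
    exact h12.congr (Filter.Eventually.of_forall fun x => (hG x).symm)
  -- the main identity: ∫∫ S = NA·DB − NB·DA
  have hI : (∫ x, ∫ y, S x y) = NA * DB - NB * DA := by
    have e : (fun x => ∫ y, S x y) = fun x =>
        ((x - μ) * (fX x * fA (s - x))) * DB - ((x - μ) * (fX x * fB (s - x))) * DA := by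
      funext x
      exact hF x
    rw [e, integral_sub ((numc_int hfX hfA hAs hAqc s μ).mul_const _)
      ((numc_int hfX hfB hBs hBqc s μ).mul_const _), integral_mul_const, integral_mul_const]
  -- continuity and product integrability of S
  have hmeas : Continuous (Function.uncurry S) := by
    have c1 : Continuous fun z : ℝ × ℝ => (z.1 - μ) * fX z.1 * fX z.2 :=
      ((continuous_fst.sub continuous_const).mul ((dcont hfX).comp continuous_fst)).mul
        ((dcont hfX).comp continuous_snd)
    have c2 : Continuous fun z : ℝ × ℝ =>
        fA (s - z.1) * fB (s - z.2) - fB (s - z.1) * fA (s - z.2) :=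
      (((dcont hfA).comp (continuous_const.sub continuous_fst)).mul
        ((dcont hfB).comp (continuous_const.sub continuous_snd))).sub
      (((dcont hfB).comp (continuous_const.sub continuous_fst)).mul
        ((dcont hfA).comp (continuous_const.sub continuous_snd)))
    exact c1.mul c2
  have hprod : Integrable (Function.uncurry S) (volume.prod volume) := by
    have hf1 : Integrable (fun x => (|x| + |μ|) * fX x * (2 * (fA 0 * fB 0))) := by
      have : Integrable (fun x => (|x| * fX x + |μ| * fX x) * (2 * (fA 0 * fB 0))) :=
        ((dmom hfX).add ((dint hfX).const_mul _)).mul_const _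
      refine this.congr (Filter.Eventually.of_forall fun x => ?_)
      ring
    have hbound : Integrable (fun z : ℝ × ℝ =>
        ((|z.1| + |μ|) * fX z.1 * (2 * (fA 0 * fB 0))) * fX z.2) (volume.prod volume) :=
      hf1.mul_prod (dint hfX)
    refine hbound.mono hmeas.aestronglyMeasurable ?_
    filter_upwards with z
    obtain ⟨x, y⟩ := z
    simp only [Function.uncurry, hS, Real.norm_eq_abs]
    have hA0 : 0 < fA 0 := hfA.1 0
    have hB0 : 0 < fB 0 := hfB.1 0
    have hXx : 0 < fX x := hfX.1 x
    have hXy : 0 < fX y := hfX.1 y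
    have b1 : fA (s - x) ≤ fA 0 := qc_bdd hAs hAqc _
    have b2 : fA (s - y) ≤ fA 0 := qc_bdd hAs hAqc _
    have b3 : fB (s - x) ≤ fB 0 := qc_bdd hBs hBqc _
    have b4 : fB (s - y) ≤ fB 0 := qc_bdd hBs hBqc _
    have pA1 : 0 < fA (s - x) := hfA.1 _
    have pA2 : 0 < fA (s - y) := hfA.1 _
    have pB1 : 0 < fB (s - x) := hfB.1 _
    have pB2 : 0 < fB (s - y) := hfB.1 _
    have hKabs : |fA (s - x) * fB (s - y) - fB (s - x) * fA (s - y)| ≤ 2 * (fA 0 * fB 0) := by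
      rw [abs_le]
      constructor <;> nlinarith
    have e1 : |(x - μ) * fX x * fX y * (fA (s - x) * fB (s - y) - fB (s - x) * fA (s - y))| =
        (|x - μ| * fX x * fX y) * |fA (s - x) * fB (s - y) - fB (s - x) * fA (s - y)| := by
      rw [abs_mul, abs_mul, abs_mul, abs_of_pos hXx, abs_of_pos hXy]
    rw [e1, abs_of_nonneg (by positivity : (0:ℝ) ≤ (|x| + |μ|) * fX x * (2 * (fA 0 * fB 0)) * fX y)]
    have h2 : |x - μ| ≤ |x| + |μ| := abs_sub x μ
    calc |x - μ| * fX x * fX y * |fA (s - x) * fB (s - y) - fB (s - x) * fA (s - y)|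
        ≤ (|x| + |μ|) * fX x * fX y * (2 * (fA 0 * fB 0)) := by
          apply mul_le_mul
          · exact mul_le_mul_of_nonneg_right (mul_le_mul_of_nonneg_right h2 hXx.le) hXy.le
          · exact hKabs
          · exact abs_nonneg _
          · positivity
      _ = (|x| + |μ|) * fX x * (2 * (fA 0 * fB 0)) * fX y := by ring
  -- Fubini swap
  have hswap : (∫ x, ∫ y, S x y) = ∫ x, ∫ y, S y x :=
    integral_integral_swap hprod
  -- reflections
  have eF : (fun x => ∫ y, S (2*s - x) (2*s - y)) = fun x => (fun t => ∫ y, S t y) (2*s - x) := by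
    funext x
    exact refl_integral (fun y => S (2*s - x) y) (2*s)
  have eG : (fun x => ∫ y, S (2*s - y) (2*s - x)) = fun x => (fun t => ∫ y, S y t) (2*s - x) := by
    funext x
    exact refl_integral (fun y => S y (2*s - x)) (2*s)
  have hreflF : (∫ x, ∫ y, S (2*s - x) (2*s - y)) = ∫ x, ∫ y, S x y := by
    rw [eF, refl_integral (fun t => ∫ y, S t y) (2*s)]
  have hreflG : (∫ x, ∫ y, S (2*s - y) (2*s - x)) = ∫ x, ∫ y, S y x := by
    rw [eG, refl_integral (fun t => ∫ y, S y t) (2*s)]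
  have hFrint : Integrable (fun x => ∫ y, S (2*s - x) (2*s - y)) := by
    rw [eF]; exact refl_integrable hFint (2*s)
  have hGrint : Integrable (fun x => ∫ y, S (2*s - y) (2*s - x)) := by
    rw [eG]; exact refl_integrable hGint (2*s)
  -- the 4-fold sum
  have hs1 : (∫ x, ((∫ y, S x y) + (∫ y, S y x))) =
      (∫ x, ∫ y, S x y) + ∫ x, ∫ y, S y x := integral_add hFint hGint
  have hi12 : Integrable (fun x => (∫ y, S x y) + (∫ y, S y x)) := hFint.add hGint
  have hs2 : (∫ x, (((∫ y, S x y) + (∫ y, S y x)) + ∫ y, S (2*s - x) (2*s - y))) =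
      (∫ x, ((∫ y, S x y) + (∫ y, S y x))) + ∫ x, ∫ y, S (2*s - x) (2*s - y) :=
    integral_add hi12 hFrint
  have hi123 : Integrable
      (fun x => ((∫ y, S x y) + (∫ y, S y x)) + ∫ y, S (2*s - x) (2*s - y)) := hi12.add hFrint
  have hs3 : (∫ x, ((((∫ y, S x y) + (∫ y, S y x)) + ∫ y, S (2*s - x) (2*s - y))
        + ∫ y, S (2*s - y) (2*s - x))) =
      (∫ x, (((∫ y, S x y) + (∫ y, S y x)) + ∫ y, S (2*s - x) (2*s - y)))
        + ∫ x, ∫ y, S (2*s - y) (2*s - x) :=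
    integral_add hi123 hGrint
  have hsum : 4 * (∫ x, ∫ y, S x y) =
      ∫ x, ((((∫ y, S x y) + (∫ y, S y x)) + ∫ y, S (2*s - x) (2*s - y))
        + ∫ y, S (2*s - y) (2*s - x)) := by
    rw [hs3, hs2, hs1, hreflF, hreflG, ← hswap]
    ring
  -- a.e. nonnegativity of the integrand
  have haes : ∀ᵐ t : ℝ, t ≠ s := by
    have : ∀ᵐ t : ℝ, t ∈ ({s} : Set ℝ)ᶜ :=
      compl_mem_ae_iff.mpr (measure_singleton s)
    filter_upwards [this] with t ht
    simpa using ht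
  have hpos : 0 ≤ ∫ x, ((((∫ y, S x y) + (∫ y, S y x)) + ∫ y, S (2*s - x) (2*s - y))
      + ∫ y, S (2*s - y) (2*s - x)) := by
    refine integral_nonneg_of_ae ?_
    filter_upwards [haes] with x hx
    have hGyr : Integrable (fun y => S (2*s - x) (2*s - y)) :=
      refl_integrable (hFy (2*s - x)) (2*s)
    have hGyr2 : Integrable (fun y => S (2*s - y) (2*s - x)) :=
      refl_integrable (hGy (2*s - x)) (2*s)
    have e1 : (∫ y, (S x y + S y x)) = (∫ y, S x y) + ∫ y, S y x :=
      integral_add (hFy x) (hGy x)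
    have ei1 : Integrable (fun y => S x y + S y x) := (hFy x).add (hGy x)
    have e2 : (∫ y, ((S x y + S y x) + S (2*s - x) (2*s - y))) =
        (∫ y, (S x y + S y x)) + ∫ y, S (2*s - x) (2*s - y) := integral_add ei1 hGyr
    have ei2 : Integrable (fun y => (S x y + S y x) + S (2*s - x) (2*s - y)) := ei1.add hGyr
    have e3 : (∫ y, (((S x y + S y x) + S (2*s - x) (2*s - y)) + S (2*s - y) (2*s - x))) =
        (∫ y, ((S x y + S y x) + S (2*s - x) (2*s - y))) + ∫ y, S (2*s - y) (2*s - x) :=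
      integral_add ei2 hGyr2
    rw [← e1, ← e2, ← e3]
    refine integral_nonneg_of_ae ?_
    filter_upwards [haes] with y hy
    have eA1 : fA (s - (2*s - x)) = fA (s - x) := by
      rw [show s - (2*s - x) = -(s - x) by ring, even_of_symm0 hAs]
    have eA2 : fA (s - (2*s - y)) = fA (s - y) := by
      rw [show s - (2*s - y) = -(s - y) by ring, even_of_symm0 hAs]
    have eB1 : fB (s - (2*s - x)) = fB (s - x) := by
      rw [show s - (2*s - x) = -(s - x) by ring, even_of_symm0 hBs]
    have eB2 : fB (s - (2*s - y)) = fB (s - y) := by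
      rw [show s - (2*s - y) = -(s - y) by ring, even_of_symm0 hBs]
    have key := T_nonneg hfX hXs hXlc hfA hAs hBs hconf hμs hx hy
    simp only [Pi.zero_apply, hS, eA1, eA2, eB1, eB2]
    nlinarith [key]
  have hfinal : 0 ≤ NA * DB - NB * DA := by
    rw [← hI]
    linarith [hsum, hpos]
  linarith

lemma postMean_compare (hfX : IsDensity fX) (hXs : SymmAbout μ fX) (hXlc : LogConcaveFn fX)
    (hfA : IsDensity fA) (hAs : SymmAbout 0 fA) (hAqc : QuasiConcaveFn fA)
    (hfB : IsDensity fB) (hBs : SymmAbout 0 fB) (hBqc : QuasiConcaveFn fB)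
    (hconf : LessPrecise fB fA) {s : ℝ} (hμs : μ ≤ s) :
    postMean fX fB s ≤ postMean fX fA s := by
  have hDA := den_pos hfX hfA hAs hAqc s
  have hDB := den_pos hfX hfB hBs hBqc s
  have h1 := postMean_sub hfX hfA hAs hAqc s μ
  have h2 := postMean_sub hfX hfB hBs hBqc s μ
  have hc := compare_num hfX hXs hXlc hfA hAs hAqc hfB hBs hBqc hconf hμs
  have : postMean fX fB s - μ ≤ postMean fX fA s - μ := by
    rw [h1, h2, div_le_div_iff₀ hDB hDA]
    linarith [hc]
  linarith

end Chunk6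
section Chunk7
variable {fε : ℝ → ℝ} {μ : ℝ}

lemma outer_int (hfε : IsDensity fε) (hεs : SymmAbout 0 fε) (hεqc : QuasiConcaveFn fε)
    {h : ℝ → ℝ} (hc : Continuous h) {a b : ℝ} (ha0 : 0 ≤ a) (hb0 : 0 ≤ b)
    (hb : ∀ s, |h s| ≤ a + b * |s|) (x : ℝ) :
    Integrable (fun s => h s * fε (s - x)) := by
  have base : Integrable (fun s =>
      (a + b * |x|) * fε (s - x) + b * (|s - x| * fε (s - x))) := by
    have i1 : Integrable (fun s => fε (s - x)) := (dint hfε).comp_sub_right x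
    have i2 : Integrable (fun s => |s - x| * fε (s - x)) := (dmom hfε).comp_sub_right x
    exact (i1.const_mul _).add (i2.const_mul b)
  refine base.mono (hc.mul ((dcont hfε).comp (continuous_sub_right x))).aestronglyMeasurable ?_
  filter_upwards with s
  have hp : 0 < fε (s - x) := hfε.1 _
  have h1 : |h s| ≤ a + b * |x| + b * |s - x| := by
    have h2 : |s| ≤ |x| + |s - x| := by
      have := abs_add_le x (s - x)
      simpa [add_sub_cancel] using this
    have := hb s
    nlinarith
  rw [Real.norm_eq_abs, Real.norm_eq_abs, abs_mul, abs_of_pos hp,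
    abs_of_nonneg (by positivity : (0:ℝ) ≤ (a + b * |x|) * fε (s - x) + b * (|s - x| * fε (s - x)))]
  nlinarith [mul_le_mul_of_nonneg_right h1 hp.le]

lemma eps_total (hfε : IsDensity fε) (x : ℝ) : (∫ s, fε (s - x)) = 1 := by
  rw [integral_sub_right_eq_self fε x]
  exact hfε.2.2.1

lemma eps_mean (hfε : IsDensity fε) (hεs : SymmAbout 0 fε) : (∫ u, u * fε u) = 0 := by
  have h1 : ∫ u, (fun t => t * fε t) (0 - u) = ∫ u, u * fε u :=
    refl_integral (fun t => t * fε t) 0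
  have e : (fun u => (fun t => t * fε t) (0 - u)) = fun u => -(u * fε u) := by
    funext u
    simp only [zero_sub]
    rw [even_of_symm0 hεs]
    ring
  rw [e, integral_neg] at h1
  linarith

lemma eps_id (hfε : IsDensity fε) (hεs : SymmAbout 0 fε) (x : ℝ) :
    (∫ s, s * fε (s - x)) = x := by
  have h1 : ∫ s, (fun u => (u + x) * fε u) (s - x) = ∫ u, (u + x) * fε u :=
    integral_sub_right_eq_self (fun u => (u + x) * fε u) x
  have e : (fun s => (fun u => (u + x) * fε u) (s - x)) = fun s => s * fε (s - x) := by
    funext s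
    simp only [sub_add_cancel]
  rw [e] at h1
  have e2 : (fun u => (u + x) * fε u) = fun u => u * fε u + x * fε u := by
    funext u
    ring
  rw [h1, e2, integral_add (dxmul hfε) ((dint hfε).const_mul x), eps_mean hfε hεs,
    integral_const_mul, hfε.2.2.1]
  ring

/-- The key averaging inequality: if h is antisymmetric about μ and nonnegative right of μ,
then its fε(·-x)-average is nonnegative whenever x ≥ μ. -/
lemma avg_pair (hfε : IsDensity fε) (hεs : SymmAbout 0 fε) (hεqc : QuasiConcaveFn fε)
    {h : ℝ → ℝ} {x : ℝ} (hint : Integrable (fun s => h s * fε (s - x)))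
    (hanti : ∀ s, h (2*μ - s) = - h s) (hsign : ∀ s, μ ≤ s → 0 ≤ h s) (hx : μ ≤ x) :
    0 ≤ ∫ s, h s * fε (s - x) := by
  refine pair_nonneg hint (2*μ) ?_
  intro s
  simp only [hanti s]
  rcases le_total μ s with hs | hs
  · have hsgn : 0 ≤ h s := hsign s hs
    have hcmp : fε (2*μ - s - x) ≤ fε (s - x) := by
      refine qc_anti hεs hεqc ?_
      have : |s - x| ≤ s - μ + (x - μ) := abs_le.mpr ⟨by linarith, by linarith⟩
      refine this.trans ?_
      rw [show (2:ℝ)*μ - s - x = -((s - μ) + (x - μ)) by ring, abs_neg]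
      exact le_abs_self _
    nlinarith [mul_nonneg hsgn (sub_nonneg.mpr hcmp)]
  · have hsgn : 0 ≤ h (2*μ - s) := hsign _ (by linarith)
    have hsgn' : h s ≤ 0 := by
      have := hanti s
      linarith [hsgn, this.symm.le]
    have hcmp : fε (s - x) ≤ fε (2*μ - s - x) := by
      refine qc_anti hεs hεqc ?_
      have : |2*μ - s - x| ≤ x - s := abs_le.mpr ⟨by linarith, by linarith⟩
      refine this.trans ?_
      rw [show x - s = -(s - x) by ring]
      exact neg_le_abs _
    nlinarith [mul_nonneg (neg_nonneg.mpr hsgn') (sub_nonneg.mpr hcmp)]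

end Chunk7
section Chunk8
variable {fX fε fA fB : ℝ → ℝ} {μ : ℝ}

lemma mabs_bound {m : ℝ → ℝ} (hmb : ∀ s, |m s - μ| ≤ |s - μ|) (s : ℝ) :
    |m s| ≤ 2*|μ| + 1 * |s| := by
  have b1 := hmb s
  have b2 : |s - μ| ≤ |s| + |μ| := abs_sub s μ
  have b3 : |m s| ≤ |m s - μ| + |μ| := by
    have := abs_add_le (m s - μ) μ
    simpa [sub_add_cancel] using this
  linarith

lemma avg_reflect (hfε : IsDensity fε) (hεs : SymmAbout 0 fε)
    {m : ℝ → ℝ} {x : ℝ} (hanti : ∀ s, m (2*μ - s) = 2*μ - m s)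
    (hint : Integrable (fun s => m s * fε (s - x))) :
    (∫ s, m s * fε (s - (2*μ - x))) = 2*μ - ∫ s, m s * fε (s - x) := by
  have h1 := refl_integral (fun s => m s * fε (s - (2*μ - x))) (2*μ)
  have e : (fun s => (fun t => m t * fε (t - (2*μ - x))) (2*μ - s)) =
      fun s => 2*μ * fε (s - x) - m s * fε (s - x) := by
    funext s
    simp only
    rw [hanti s, show (2*μ - s) - (2*μ - x) = -(s - x) by ring, even_of_symm0 hεs]
    ring
  rw [e] at h1
  rw [← h1, integral_sub (((dint hfε).comp_sub_right x).const_mul _) hint,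
    integral_const_mul, eps_total hfε x]
  ring

/-- The three inequalities for x ≥ μ. -/
lemma main_half (hfX : IsDensity fX) (hfXsym : SymmAbout μ fX) (hfXlc : LogConcaveFn fX)
    (hfε : IsDensity fε) (hfεsym : SymmAbout 0 fε) (hfεqc : QuasiConcaveFn fε)
    (hfA : IsDensity fA) (hfAsym : SymmAbout 0 fA) (hfAqc : QuasiConcaveFn fA)
    (hfB : IsDensity fB) (hfBsym : SymmAbout 0 fB) (hfBqc : QuasiConcaveFn fB)
    (hconf : LessPrecise fB fA) {x : ℝ} (hx : μ ≤ x) :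
    (∫ s, postMean fX fA s * fε (s - x)) ≤ x ∧
    (∫ s, postMean fX fB s * fε (s - x)) ≤ ∫ s, postMean fX fA s * fε (s - x) ∧
    μ ≤ ∫ s, postMean fX fB s * fε (s - x) := by
  set mA := postMean fX fA with hmA
  set mB := postMean fX fB with hmB
  have mcA : Continuous mA := postMean_cont hfX hfA hfAsym hfAqc
  have mcB : Continuous mB := postMean_cont hfX hfB hfBsym hfBqc
  have mbA : ∀ s, |mA s - μ| ≤ |s - μ| := postMean_bound hfX hfXsym hfXlc hfA hfAsym hfAqc
  have mbB : ∀ s, |mB s - μ| ≤ |s - μ| := postMean_bound hfX hfXsym hfXlc hfB hfBsym hfBqc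
  have maA : ∀ s, mA (2*μ - s) = 2*μ - mA s :=
    fun s => postMean_antisym hfX hfXsym hfA hfAsym hfAqc s
  have maB : ∀ s, mB (2*μ - s) = 2*μ - mB s :=
    fun s => postMean_antisym hfX hfXsym hfB hfBsym hfBqc s
  have i1 : Integrable (fun s => fε (s - x)) := (dint hfε).comp_sub_right x
  have iMA : Integrable (fun s => mA s * fε (s - x)) :=
    outer_int hfε hfεsym hfεqc mcA (by positivity) zero_le_one (mabs_bound mbA) x
  have iMB : Integrable (fun s => mB s * fε (s - x)) :=
    outer_int hfε hfεsym hfεqc mcB (by positivity) zero_le_one (mabs_bound mbB) x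
  have iId : Integrable (fun s => s * fε (s - x)) :=
    outer_int hfε hfεsym hfεqc continuous_id le_rfl zero_le_one
      (fun s => by simp) x
  refine ⟨?_, ?_, ?_⟩
  · -- ∫ mA · fε ≤ x
    have hint : Integrable (fun s => (s - mA s) * fε (s - x)) := by
      refine (iId.sub iMA).congr (Filter.Eventually.of_forall fun s => ?_)
      simp only [Pi.sub_apply]
      ring
    have hp := avg_pair (μ := μ) hfε hfεsym hfεqc hint
      (fun s => by rw [maA s]; ring)
      (fun s hs => sub_nonneg.mpr
        (postMean_between hfX hfXsym hfXlc hfA hfAsym hfAqc hs).2) hx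
    have e : (fun s => (s - mA s) * fε (s - x)) =
        fun s => s * fε (s - x) - mA s * fε (s - x) := by
      funext s
      ring
    rw [e, integral_sub iId iMA, eps_id hfε hfεsym x] at hp
    linarith
  · -- ∫ mB · fε ≤ ∫ mA · fε
    have hint : Integrable (fun s => (mA s - mB s) * fε (s - x)) := by
      refine (iMA.sub iMB).congr (Filter.Eventually.of_forall fun s => ?_)
      simp only [Pi.sub_apply]
      ring
    have hp := avg_pair (μ := μ) hfε hfεsym hfεqc hint
      (fun s => by rw [maA s, maB s]; ring)
      (fun s hs => sub_nonneg.mpr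
        (postMean_compare hfX hfXsym hfXlc hfA hfAsym hfAqc hfB hfBsym hfBqc hconf hs)) hx
    have e : (fun s => (mA s - mB s) * fε (s - x)) =
        fun s => mA s * fε (s - x) - mB s * fε (s - x) := by
      funext s
      ring
    rw [e, integral_sub iMA iMB] at hp
    linarith
  · -- μ ≤ ∫ mB · fε
    have hint : Integrable (fun s => (mB s - μ) * fε (s - x)) := by
      refine (iMB.sub (i1.const_mul μ)).congr (Filter.Eventually.of_forall fun s => ?_)
      simp only [Pi.sub_apply]
      ring
    have hp := avg_pair (μ := μ) hfε hfεsym hfεqc hint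
      (fun s => by rw [maB s]; ring)
      (fun s hs => sub_nonneg.mpr
        (postMean_between hfX hfXsym hfXlc hfB hfBsym hfBqc hs).1) hx
    have e : (fun s => (mB s - μ) * fε (s - x)) =
        fun s => mB s * fε (s - x) - μ * fε (s - x) := by
      funext s
      ring
    rw [e, integral_sub iMB (i1.const_mul μ), integral_const_mul, eps_total hfε x] at hp
    linarith

end Chunk8
end OAP

/-- Proposition 2: greater confidence in the signal brings the average posterior
mean closer to the state. -/
theorem overconfidence_average_posterior
    (fX fε fA fB : ℝ → ℝ) (μ : ℝ)
    (hfX : IsDensity fX) (hfXsym : SymmAbout μ fX) (hfXlc : LogConcaveFn fX)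
    (hμ : μ = ∫ x, x * fX x)
    (hfε : IsDensity fε) (hfεsym : SymmAbout 0 fε) (hfεqc : QuasiConcaveFn fε)
    (hfA : IsDensity fA) (hfAsym : SymmAbout 0 fA) (hfAqc : QuasiConcaveFn fA)
    (hfB : IsDensity fB) (hfBsym : SymmAbout 0 fB) (hfBqc : QuasiConcaveFn fB)
    (hconf : LessPrecise fB fA) :
    (∀ x, μ ≤ x →
        (∫ s, postMean fX fA s * fε (s - x)) ≤ x ∧
        (∫ s, postMean fX fB s * fε (s - x)) ≤ ∫ s, postMean fX fA s * fε (s - x) ∧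
        μ ≤ ∫ s, postMean fX fB s * fε (s - x)) ∧
    (∀ x ≤ μ,
        x ≤ ∫ s, postMean fX fA s * fε (s - x) ∧
        (∫ s, postMean fX fA s * fε (s - x)) ≤ ∫ s, postMean fX fB s * fε (s - x) ∧
        (∫ s, postMean fX fB s * fε (s - x)) ≤ μ) := by
  constructor
  · intro x hx
    exact OAP.main_half hfX hfXsym hfXlc hfε hfεsym hfεqc hfA hfAsym hfAqc hfB hfBsym hfBqc
      hconf hx
  · intro x hx
    have hx' : μ ≤ 2*μ - x := by linarith
    obtain ⟨h1, h2, h3⟩ := OAP.main_half hfX hfXsym hfXlc hfε hfεsym hfεqc hfA hfAsym hfAqc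
      hfB hfBsym hfBqc hconf hx'
    have iMA : Integrable (fun s => postMean fX fA s * fε (s - x)) :=
      OAP.outer_int hfε hfεsym hfεqc (OAP.postMean_cont hfX hfA hfAsym hfAqc)
        (by positivity) zero_le_one
        (OAP.mabs_bound (OAP.postMean_bound hfX hfXsym hfXlc hfA hfAsym hfAqc)) x
    have iMB : Integrable (fun s => postMean fX fB s * fε (s - x)) :=
      OAP.outer_int hfε hfεsym hfεqc (OAP.postMean_cont hfX hfB hfBsym hfBqc)
        (by positivity) zero_le_one
        (OAP.mabs_bound (OAP.postMean_bound hfX hfXsym hfXlc hfB hfBsym hfBqc)) x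
    have rA := OAP.avg_reflect hfε hfεsym
      (fun s => OAP.postMean_antisym hfX hfXsym hfA hfAsym hfAqc s) iMA
    have rB := OAP.avg_reflect hfε hfεsym
      (fun s => OAP.postMean_antisym hfX hfXsym hfB hfBsym hfBqc s) iMB
    rw [rA] at h1 h2
    rw [rB] at h2 h3
    exact ⟨by linarith, by linarith, by linarith⟩
end
end

section
/- A more precise prior brings the average posterior mean closer to the prior mean (Proposition 3). Let f_ε be a log-concave density symmetric about 0. Let f_A and f_B be quasi-concave densities symmetric about the same mean μ such that f_A is less precise than f_B, i.e., x ↦ f_A(μ+x)/f_B(μ+x) is nondecreasing on (0,∞) (agent B has the more precise prior). For i ∈ {A,B}, define m_i(s) := (∫ x·f_i(x)·f_ε(s−x) dx)/(∫ f_i(x)·f_ε(s−x) dx), the posterior mean of agent i given signal realization s. Then for every state x ≥ μ: x ≥ ∫ m_A(s)·f_ε(s−x) ds ≥ ∫ m_B(s)·f_ε(s−x) ds ≥ μ, and for every x ≤ μ: x ≤ ∫ m_A(s)·f_ε(s−x) ds ≤ ∫ m_B(s)·f_ε(s−x) ds ≤ μ. -/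
open MeasureTheory Real Set

noncomputable section

namespace P3

/-! ### Toolbox -/

lemma qc_of_lc {f : ℝ → ℝ} (hpos : ∀ x, 0 < f x) (h : LogConcaveFn f) :
    QuasiConcaveFn f := by
  intro x y t ht0 ht1
  have hb : (0:ℝ) ≤ 1 - t := by linarith
  have hab : t + (1 - t) = 1 := by ring
  have h2 := h.2 (mem_univ x) (mem_univ y) ht0 hb hab
  simp only [smul_eq_mul] at h2
  have hmin : min (Real.log (f x)) (Real.log (f y)) ≤
      t * Real.log (f x) + (1 - t) * Real.log (f y) := by
    rcases le_total (Real.log (f x)) (Real.log (f y)) with hc | hc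
    · have : min (Real.log (f x)) (Real.log (f y)) = Real.log (f x) := min_eq_left hc
      rw [this]; nlinarith
    · have : min (Real.log (f x)) (Real.log (f y)) = Real.log (f y) := min_eq_right hc
      rw [this]; nlinarith
  have hle : min (Real.log (f x)) (Real.log (f y)) ≤ Real.log (f (t * x + (1 - t) * y)) :=
    le_trans hmin h2
  rcases le_total (f x) (f y) with hc | hc
  · rw [min_eq_left hc]
    rw [min_eq_left ((Real.log_le_log_iff (hpos x) (hpos y)).mpr hc)] at hle
    have := (Real.log_le_log_iff (hpos x) (hpos _)).mp hle
    simpa using this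
  · rw [min_eq_right hc]
    rw [min_eq_right ((Real.log_le_log_iff (hpos y) (hpos x)).mpr hc)] at hle
    have := (Real.log_le_log_iff (hpos y) (hpos _)).mp hle
    simpa using this

/-- symmetric quasi-concave functions are unimodal: farther from the center, smaller. -/
lemma unimodal {f : ℝ → ℝ} {m : ℝ} (hsym : SymmAbout m f) (hqc : QuasiConcaveFn f)
    {a b : ℝ} (hab : |a| ≤ |b|) : f (m + b) ≤ f (m + a) := by
  have habs : ∀ c : ℝ, f (m + c) = f (m + |c|) := by
    intro c
    rcases le_total 0 c with hc | hc
    · rw [abs_of_nonneg hc]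
    · rw [abs_of_nonpos hc]
      have := hsym (-c)
      rw [sub_neg_eq_add] at this
      exact this.symm
  rw [habs a, habs b]
  set c := |b| with hc
  have hc0 : 0 ≤ c := abs_nonneg _
  rcases eq_or_lt_of_le hc0 with hc0' | hc0'
  · have ha0 : |a| = 0 := le_antisymm (by rw [← hc0'] at hab; exact hab) (abs_nonneg _)
    rw [ha0, ← hc0']
  · set t := (|a| + c) / (2 * c) with htdef
    have ht0 : 0 ≤ t := by positivity
    have ht1 : t ≤ 1 := by
      rw [htdef, div_le_one (by positivity)]
      have := hab; linarith [abs_nonneg a]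
    have hcomb : t * (m + c) + (1 - t) * (m - c) = m + |a| := by
      have h2c : t * (2 * c) = |a| + c := by
        rw [htdef]; exact div_mul_cancel₀ _ (mul_pos two_pos hc0').ne'
      linear_combination h2c
    have := hqc (m + c) (m - c) t ht0 ht1
    rw [hcomb] at this
    have hsymc : f (m - c) = f (m + c) := (hsym c).symm
    rw [hsymc, min_self] at this
    exact this

/-- concave increment inequality: increments over right-shifted intervals are smaller. -/
lemma concave_increment {ℓ : ℝ → ℝ} (h : ConcaveOn ℝ Set.univ ℓ)
    {x₁ x₂ δ : ℝ} (hx : x₁ ≤ x₂) (hδ : 0 ≤ δ) :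
    ℓ (x₂ + δ) + ℓ x₁ ≤ ℓ x₂ + ℓ (x₁ + δ) := by
  rcases eq_or_lt_of_le hx with h1 | h1
  · rw [h1]; ring_nf; rfl
  rcases eq_or_lt_of_le hδ with h2 | h2
  · rw [← h2]; ring_nf; rfl
  set D := x₂ - x₁ + δ with hD
  have hD0 : 0 < D := by rw [hD]; linarith
  set θ := (x₂ - x₁) / D with hθ
  have hθ0 : 0 ≤ θ := div_nonneg (by linarith) hD0.le
  have hθ1 : θ ≤ 1 := by rw [hθ, div_le_one hD0]; linarith
  have hθD : θ * D = x₂ - x₁ := by rw [hθ]; exact div_mul_cancel₀ _ hD0.ne'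
  have e1 : (1 - θ) * x₁ + θ * (x₂ + δ) = x₂ := by linear_combination hθD - θ * hD
  have e2 : θ * x₁ + (1 - θ) * (x₂ + δ) = x₁ + δ := by linear_combination -hθD + θ * hD
  have hθb : (0:ℝ) ≤ 1 - θ := by linarith
  have hab1 : (1 - θ) + θ = 1 := by ring
  have hab2 : θ + (1 - θ) = 1 := by ring
  have c1 := h.2 (mem_univ x₁) (mem_univ (x₂ + δ)) hθb hθ0 hab1
  have c2 := h.2 (mem_univ x₁) (mem_univ (x₂ + δ)) hθ0 hθb hab2
  simp only [smul_eq_mul] at c1 c2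
  rw [e1] at c1
  rw [e2] at c2
  linarith

/-- integral of an odd function is zero (no integrability needed). -/
lemma integral_odd_eq_zero {G : ℝ → ℝ} (hodd : ∀ x, G (-x) = -G x) :
    (∫ x, G x) = 0 := by
  have h1 : (∫ x, G (-x)) = ∫ x, G x := integral_neg_eq_self G volume
  have h2 : (∫ x, G (-x)) = - ∫ x, G x := by
    simp_rw [hodd]; exact integral_neg G
  linarith [h1, h2]

/-- fold an integral over ℝ onto (0,∞). -/
lemma integral_fold {H : ℝ → ℝ} (hH : Integrable H) :
    (∫ t, H t) = ∫ t in Ioi (0:ℝ), (H t + H (-t)) := by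
  have hneg : IntegrableOn (fun t => H (-t)) (Ioi (0:ℝ)) := by
    have : Integrable (fun t => H (-t)) := hH.comp_neg
    exact this.integrableOn
  have h1 : (∫ t in Ioi (0:ℝ), (H t + H (-t))) =
      (∫ t in Ioi (0:ℝ), H t) + ∫ t in Ioi (0:ℝ), H (-t) :=
    integral_add hH.integrableOn hneg
  have h2 : (∫ t in Ioi (0:ℝ), H (-t)) = ∫ t in Iic (0:ℝ), H t := by
    have := integral_comp_neg_Ioi (0:ℝ) H
    rwa [neg_zero] at this
  rw [h1, h2, ← intervalIntegral.integral_Iic_add_Ioi (b := (0:ℝ))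
    hH.integrableOn hH.integrableOn]
  ring

/-! ### Density facts -/

lemma dens_cont {f : ℝ → ℝ} (hf : IsDensity f) : Continuous f := hf.2.1.continuous

lemma dens_integrable {f : ℝ → ℝ} (hf : IsDensity f) : Integrable f := by
  by_contra h
  have h0 := integral_undef h
  rw [hf.2.2.1] at h0
  norm_num at h0

lemma dens_xmul_integrable {f : ℝ → ℝ} (hf : IsDensity f) :
    Integrable (fun x => x * f x) := by
  refine (hf.2.2.2).mono' ?_ ?_
  · exact (continuous_id.mul (dens_cont hf)).aestronglyMeasurable
  · filter_upwards with x
    rw [Real.norm_eq_abs, abs_mul]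
    rw [abs_of_nonneg (hf.1 x).le]

/-- a symmetric quasi-concave density is bounded by its value at the mode. -/
lemma dens_bounded {f : ℝ → ℝ} {m : ℝ} (hsym : SymmAbout m f) (hqc : QuasiConcaveFn f)
    (x : ℝ) : f x ≤ f m := by
  have := unimodal hsym hqc (a := 0) (b := x - m) (by simp)
  simpa using this

/-- integrable times continuous-bounded is integrable. -/
lemma integrable_mul_bdd {g h : ℝ → ℝ} (hg : Integrable g)
    (hh : Continuous h) (C : ℝ) (hC : ∀ x, |h x| ≤ C) :
    Integrable (fun x => g x * h x) := by
  refine (hg.abs.const_mul C).mono' ?_ ?_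
  · exact (hg.aestronglyMeasurable.mul hh.aestronglyMeasurable)
  · filter_upwards with x
    rw [Real.norm_eq_abs, abs_mul, mul_comm C _]
    exact mul_le_mul_of_nonneg_left (hC x) (abs_nonneg _)

/-! ### noise density facts -/

lemma even_pt {fε : ℝ → ℝ} (hs : SymmAbout 0 fε) (x : ℝ) : fε (-x) = fε x := by
  have := hs x
  simp only [zero_add, zero_sub] at this
  exact this.symm

lemma fε_anti {fε : ℝ → ℝ} (hs : SymmAbout 0 fε) (hqc : QuasiConcaveFn fε)
    {a b : ℝ} (hab : |a| ≤ |b|) : fε b ≤ fε a := by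
  have := unimodal hs hqc hab
  simpa using this

lemma fε_anti' {fε : ℝ → ℝ} (hs : SymmAbout 0 fε) (hqc : QuasiConcaveFn fε)
    {a t : ℝ} (ha : 0 ≤ a) (ht : 0 ≤ t) : fε (a + t) ≤ fε (a - t) := by
  refine fε_anti hs hqc ?_
  rw [abs_of_nonneg (by linarith : (0:ℝ) ≤ a + t)]
  exact le_trans (abs_sub _ _) (by simp [abs_of_nonneg ha, abs_of_nonneg ht])

lemma fε_bd {fε : ℝ → ℝ} (hfε : IsDensity fε) (hs : SymmAbout 0 fε)
    (hqc : QuasiConcaveFn fε) (x : ℝ) : |fε x| ≤ fε 0 := by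
  rw [abs_of_nonneg (hfε.1 x).le]
  exact dens_bounded hs hqc x

/-! ### kernel integrals -/

section Kernel

variable {fε f : ℝ → ℝ} {μ : ℝ}

lemma Kint_integrable (hfε : IsDensity fε) (hεs : SymmAbout 0 fε) (hεqc : QuasiConcaveFn fε)
    (hf : IsDensity f) (s : ℝ) : Integrable (fun x => f x * fε (s - x)) :=
  integrable_mul_bdd (dens_integrable hf)
    ((dens_cont hfε).comp (continuous_const.sub continuous_id))
    (fε 0) (fun x => fε_bd hfε hεs hεqc _)

lemma Nint_integrable (hfε : IsDensity fε) (hεs : SymmAbout 0 fε) (hεqc : QuasiConcaveFn fε)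
    (hf : IsDensity f) (s : ℝ) : Integrable (fun x => x * f x * fε (s - x)) :=
  integrable_mul_bdd (dens_xmul_integrable hf)
    ((dens_cont hfε).comp (continuous_const.sub continuous_id))
    (fε 0) (fun x => fε_bd hfε hεs hεqc _)

lemma Kd_pos (hfε : IsDensity fε) (hεs : SymmAbout 0 fε) (hεqc : QuasiConcaveFn fε)
    (hf : IsDensity f) (s : ℝ) : 0 < ∫ x, f x * fε (s - x) := by
  rw [integral_pos_iff_support_of_nonneg
      (fun x => mul_nonneg (hf.1 x).le (hfε.1 _).le)
      (Kint_integrable hfε hεs hεqc hf s)]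
  have : Function.support (fun x => f x * fε (s - x)) = Set.univ := by
    ext x
    simp only [Function.support, ne_eq, mem_setOf_eq, mem_univ, iff_true]
    exact (mul_pos (hf.1 x) (hfε.1 (s - x))).ne'
  rw [this]
  simp

lemma Kd_cont (hfε : IsDensity fε) (hεs : SymmAbout 0 fε) (hεqc : QuasiConcaveFn fε)
    (hf : IsDensity f) : Continuous (fun s => ∫ x, f x * fε (s - x)) := by
  refine continuous_of_dominated (bound := fun x => f x * fε 0) ?_ ?_ ?_ ?_
  · intro s
    exact ((dens_cont hf).mul ((dens_cont hfε).comp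
      (continuous_const.sub continuous_id))).aestronglyMeasurable
  · intro s
    filter_upwards with x
    rw [Real.norm_eq_abs, abs_mul, abs_of_nonneg (hf.1 x).le]
    exact mul_le_mul_of_nonneg_left (fε_bd hfε hεs hεqc _) (hf.1 x).le
  · exact (dens_integrable hf).mul_const _
  · filter_upwards with x
    exact (continuous_const.mul ((dens_cont hfε).comp
      ((continuous_id.sub continuous_const)))).congr (fun s => rfl)

lemma Nd_cont (hfε : IsDensity fε) (hεs : SymmAbout 0 fε) (hεqc : QuasiConcaveFn fε)
    (hf : IsDensity f) : Continuous (fun s => ∫ x, x * f x * fε (s - x)) := by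
  refine continuous_of_dominated (bound := fun x => |x| * f x * fε 0) ?_ ?_ ?_ ?_
  · intro s
    exact ((continuous_id.mul (dens_cont hf)).mul ((dens_cont hfε).comp
      (continuous_const.sub continuous_id))).aestronglyMeasurable
  · intro s
    filter_upwards with x
    rw [Real.norm_eq_abs, abs_mul, abs_mul, abs_of_nonneg (hf.1 x).le]
    exact mul_le_mul_of_nonneg_left (fε_bd hfε hεs hεqc _)
      (mul_nonneg (abs_nonneg x) (hf.1 x).le)
  · exact (hf.2.2.2).mul_const _
  · filter_upwards with x
    exact (continuous_const.mul ((dens_cont hfε).comp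
      ((continuous_id.sub continuous_const)))).congr (fun s => rfl)

end Kernel

/-! ### shrinkage -/

section Shrink

variable {fε f : ℝ → ℝ} {μ : ℝ}

lemma shrink_lower (hfε : IsDensity fε) (hεs : SymmAbout 0 fε) (hεqc : QuasiConcaveFn fε)
    (hf : IsDensity f) (hsym : SymmAbout μ f) {s : ℝ} (hs : μ ≤ s) :
    0 ≤ (∫ x, x * f x * fε (s - x)) - μ * ∫ x, f x * fε (s - x) := by
  set a := s - μ with hadef
  have ha : 0 ≤ a := by rw [hadef]; linarith
  have hKi := Kint_integrable hfε hεs hεqc hf s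
  have hNi := Nint_integrable hfε hεs hεqc hf s
  have h1 : Integrable (fun x => μ * (f x * fε (s - x))) := hKi.const_mul μ
  have hFint : Integrable (fun x => (x - μ) * (f x * fε (s - x))) :=
    (hNi.sub h1).congr (ae_of_all _ fun x => by simp only [Pi.sub_apply]; ring)
  have e0 : (∫ x, x * f x * fε (s - x)) - μ * ∫ x, f x * fε (s - x)
      = ∫ x, (x - μ) * (f x * fε (s - x)) := by
    rw [show (∫ x, (x - μ) * (f x * fε (s - x)))
        = ∫ x, (x * f x * fε (s - x) - μ * (f x * fε (s - x))) from
      integral_congr_ae (ae_of_all _ fun x => by ring)]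
    rw [integral_sub hNi h1, integral_const_mul]
  have hHint : Integrable (fun t => (μ + t - μ) * (f (μ + t) * fε (s - (μ + t)))) :=
    hFint.comp_add_left μ
  have e1 : (∫ x, (x - μ) * (f x * fε (s - x)))
      = ∫ t, (μ + t - μ) * (f (μ + t) * fε (s - (μ + t))) :=
    (integral_add_left_eq_self (fun x => (x - μ) * (f x * fε (s - x))) μ).symm
  rw [e0, e1, integral_fold hHint]
  refine setIntegral_nonneg measurableSet_Ioi (fun t ht => ?_)
  have hf1 : f (μ + -t) = f (μ + t) := by
    rw [show μ + -t = μ - t from by ring]; exact (hsym t).symm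
  have e3 : (μ + t - μ) * (f (μ + t) * fε (s - (μ + t)))
      + (μ + -t - μ) * (f (μ + -t) * fε (s - (μ + -t)))
      = t * f (μ + t) * (fε (a - t) - fε (a + t)) := by
    rw [hf1, show s - (μ + t) = a - t from by rw [hadef]; ring,
      show s - (μ + -t) = a + t from by rw [hadef]; ring]
    ring
  rw [e3]
  have ht' : (0:ℝ) ≤ t := (mem_Ioi.mp ht).le
  exact mul_nonneg (mul_nonneg ht' (hf.1 _).le)
    (sub_nonneg.mpr (fε_anti' hεs hεqc ha ht'))

lemma shrink_upper (hfε : IsDensity fε) (hεs : SymmAbout 0 fε) (hεqc : QuasiConcaveFn fε)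
    (hf : IsDensity f) (hsym : SymmAbout μ f) (hqc : QuasiConcaveFn f)
    {s : ℝ} (hs : μ ≤ s) :
    0 ≤ s * (∫ x, f x * fε (s - x)) - ∫ x, x * f x * fε (s - x) := by
  set a := s - μ with hadef
  have ha : 0 ≤ a := by rw [hadef]; linarith
  have hKi := Kint_integrable hfε hεs hεqc hf s
  have hNi := Nint_integrable hfε hεs hεqc hf s
  have h1 : Integrable (fun x => s * (f x * fε (s - x))) := hKi.const_mul s
  have hFint : Integrable (fun x => (s - x) * (f x * fε (s - x))) :=
    (h1.sub hNi).congr (ae_of_all _ fun x => by simp only [Pi.sub_apply]; ring)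
  have e0 : s * (∫ x, f x * fε (s - x)) - (∫ x, x * f x * fε (s - x))
      = ∫ x, (s - x) * (f x * fε (s - x)) := by
    rw [show (∫ x, (s - x) * (f x * fε (s - x)))
        = ∫ x, (s * (f x * fε (s - x)) - x * f x * fε (s - x)) from
      integral_congr_ae (ae_of_all _ fun x => by ring)]
    rw [integral_sub h1 hNi, integral_const_mul]
  have hHint : Integrable (fun u => (s - (s - u)) * (f (s - u) * fε (s - (s - u)))) :=
    hFint.comp_sub_left s
  have e1 : (∫ x, (s - x) * (f x * fε (s - x)))
      = ∫ u, (s - (s - u)) * (f (s - u) * fε (s - (s - u))) :=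
    (integral_sub_left_eq_self (fun x => (s - x) * (f x * fε (s - x))) volume s).symm
  rw [e0, e1, integral_fold hHint]
  refine setIntegral_nonneg measurableSet_Ioi (fun u hu => ?_)
  have hu' : (0:ℝ) ≤ u := (mem_Ioi.mp hu).le
  have e3 : (s - (s - u)) * (f (s - u) * fε (s - (s - u)))
      + (s - (s - -u)) * (f (s - -u) * fε (s - (s - -u)))
      = u * fε u * (f (μ + (a - u)) - f (μ + (a + u))) := by
    rw [show s - (s - u) = u from by ring, show s - (s - -u) = -u from by ring,
      show s - u = μ + (a - u) from by rw [hadef]; ring,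
      show s - -u = μ + (a + u) from by rw [hadef]; ring,
      even_pt hεs u]
    ring
  rw [e3]
  refine mul_nonneg (mul_nonneg hu' (hfε.1 _).le) (sub_nonneg.mpr ?_)
  refine unimodal hsym hqc ?_
  rw [abs_of_nonneg (by linarith : (0:ℝ) ≤ a + u)]
  exact le_trans (abs_sub _ _) (by simp [abs_of_nonneg ha, abs_of_nonneg hu'])

end Shrink

/-! ### reflection -/

lemma symm_pt {f : ℝ → ℝ} {μ : ℝ} (hsym : SymmAbout μ f) (x : ℝ) :
    f (2*μ - x) = f x := by
  have h := hsym (μ - x)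
  rw [show μ + (μ - x) = 2*μ - x from by ring, show μ - (μ - x) = x from by ring] at h
  exact h

section Reflect

variable {fε f : ℝ → ℝ} {μ : ℝ}

lemma Kd_reflect (hεs : SymmAbout 0 fε) (hsym : SymmAbout μ f) (s : ℝ) :
    (∫ x, f x * fε ((2*μ - s) - x)) = ∫ x, f x * fε (s - x) := by
  have h := integral_sub_left_eq_self (fun x => f x * fε ((2*μ - s) - x)) volume (2*μ)
  rw [← h]
  refine integral_congr_ae (ae_of_all _ fun x => ?_)
  show f (2*μ - x) * fε ((2*μ - s) - (2*μ - x)) = f x * fε (s - x)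
  rw [symm_pt hsym x, show (2*μ - s) - (2*μ - x) = -(s - x) from by ring, even_pt hεs]

lemma Nd_reflect (hfε : IsDensity fε) (hεs : SymmAbout 0 fε) (hεqc : QuasiConcaveFn fε)
    (hf : IsDensity f) (hsym : SymmAbout μ f) (s : ℝ) :
    (∫ x, x * f x * fε ((2*μ - s) - x))
      = 2*μ * (∫ x, f x * fε (s - x)) - ∫ x, x * f x * fε (s - x) := by
  have h := integral_sub_left_eq_self (fun x => x * f x * fε ((2*μ - s) - x)) volume (2*μ)
  rw [← h]
  have e : ∀ x : ℝ, (2*μ - x) * f (2*μ - x) * fε ((2*μ - s) - (2*μ - x))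
      = 2*μ * (f x * fε (s - x)) - x * f x * fε (s - x) := by
    intro x
    rw [symm_pt hsym x, show (2*μ - s) - (2*μ - x) = -(s - x) from by ring, even_pt hεs]
    ring
  rw [show (∫ x, (2*μ - x) * f (2*μ - x) * fε ((2*μ - s) - (2*μ - x)))
      = ∫ x, (2*μ * (f x * fε (s - x)) - x * f x * fε (s - x)) from
    integral_congr_ae (ae_of_all _ e)]
  rw [integral_sub ((Kint_integrable hfε hεs hεqc hf s).const_mul _)
    (Nint_integrable hfε hεs hεqc hf s), integral_const_mul]

lemma postMean_reflect (hfε : IsDensity fε) (hεs : SymmAbout 0 fε) (hεqc : QuasiConcaveFn fε)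
    (hf : IsDensity f) (hsym : SymmAbout μ f) (s : ℝ) :
    postMean f fε (2*μ - s) = 2*μ - postMean f fε s := by
  have hK := Kd_pos hfε hεs hεqc hf s
  simp only [postMean]
  rw [Kd_reflect hεs hsym s, Nd_reflect hfε hεs hεqc hf hsym s]
  field_simp

lemma postMean_ge (hfε : IsDensity fε) (hεs : SymmAbout 0 fε) (hεqc : QuasiConcaveFn fε)
    (hf : IsDensity f) (hsym : SymmAbout μ f) {s : ℝ} (hs : μ ≤ s) :
    μ ≤ postMean f fε s := by
  have hK := Kd_pos hfε hεs hεqc hf s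
  rw [postMean, le_div_iff₀ hK]
  linarith [shrink_lower hfε hεs hεqc hf hsym hs]

lemma postMean_le (hfε : IsDensity fε) (hεs : SymmAbout 0 fε) (hεqc : QuasiConcaveFn fε)
    (hf : IsDensity f) (hsym : SymmAbout μ f) (hqc : QuasiConcaveFn f)
    {s : ℝ} (hs : μ ≤ s) :
    postMean f fε s ≤ s := by
  have hK := Kd_pos hfε hεs hεqc hf s
  rw [postMean, div_le_iff₀ hK]
  linarith [shrink_upper hfε hεs hεqc hf hsym hqc hs]

lemma postMean_ge' (hfε : IsDensity fε) (hεs : SymmAbout 0 fε) (hεqc : QuasiConcaveFn fε)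
    (hf : IsDensity f) (hsym : SymmAbout μ f) (hqc : QuasiConcaveFn f)
    {s : ℝ} (hs : s ≤ μ) :
    s ≤ postMean f fε s := by
  have h2 : μ ≤ 2*μ - s := by linarith
  have hr := postMean_reflect hfε hεs hεqc hf hsym s
  have := postMean_le hfε hεs hεqc hf hsym hqc h2
  rw [hr] at this
  linarith

lemma postMean_le' (hfε : IsDensity fε) (hεs : SymmAbout 0 fε) (hεqc : QuasiConcaveFn fε)
    (hf : IsDensity f) (hsym : SymmAbout μ f) {s : ℝ} (hs : s ≤ μ) :
    postMean f fε s ≤ μ := by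
  have h2 : μ ≤ 2*μ - s := by linarith
  have hr := postMean_reflect hfε hεs hεqc hf hsym s
  have := postMean_ge hfε hεs hεqc hf hsym h2
  rw [hr] at this
  linarith

lemma postMean_absbd (hfε : IsDensity fε) (hεs : SymmAbout 0 fε) (hεqc : QuasiConcaveFn fε)
    (hf : IsDensity f) (hsym : SymmAbout μ f) (hqc : QuasiConcaveFn f) (s : ℝ) :
    |postMean f fε s - μ| ≤ |s - μ| := by
  rcases le_total μ s with hs | hs
  · rw [abs_of_nonneg (sub_nonneg.mpr (postMean_ge hfε hεs hεqc hf hsym hs)),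
      abs_of_nonneg (by linarith : (0:ℝ) ≤ s - μ)]
    linarith [postMean_le hfε hεs hεqc hf hsym hqc hs]
  · rw [abs_of_nonpos (sub_nonpos.mpr (postMean_le' hfε hεs hεqc hf hsym hs)),
      abs_of_nonpos (by linarith : s - μ ≤ (0:ℝ))]
    linarith [postMean_ge' hfε hεs hεqc hf hsym hqc hs]

lemma postMean_cont (hfε : IsDensity fε) (hεs : SymmAbout 0 fε) (hεqc : QuasiConcaveFn fε)
    (hf : IsDensity f) : Continuous (postMean f fε) := by
  have := (Nd_cont hfε hεs hεqc hf).div (Kd_cont hfε hεs hεqc hf)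
    (fun s => (Kd_pos hfε hεs hεqc hf s).ne')
  exact this

end Reflect

/-! ### Chebyshev correlation inequality -/

lemma chebyshev_Ioi {ρ d w : ℝ → ℝ}
    (hd : IntegrableOn d (Ioi 0)) (hw : IntegrableOn w (Ioi 0))
    (hρd : IntegrableOn (fun u => ρ u * d u) (Ioi 0))
    (hρw : IntegrableOn (fun u => ρ u * w u) (Ioi 0))
    (hpt : ∀ u ∈ Ioi (0:ℝ), ∀ v ∈ Ioi (0:ℝ),
      0 ≤ (ρ u - ρ v) * (d u * w v - d v * w u)) :
    (∫ u in Ioi (0:ℝ), d u) * (∫ u in Ioi (0:ℝ), ρ u * w u)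
      ≤ (∫ u in Ioi (0:ℝ), ρ u * d u) * (∫ u in Ioi (0:ℝ), w u) := by
  set ν := volume.restrict (Ioi (0:ℝ)) with hν
  have i1 : Integrable (fun z : ℝ × ℝ => (ρ z.1 * d z.1) * w z.2) (ν.prod ν) :=
    Integrable.mul_prod hρd hw
  have i2 : Integrable (fun z : ℝ × ℝ => (ρ z.1 * w z.1) * d z.2) (ν.prod ν) :=
    Integrable.mul_prod hρw hd
  have i3 : Integrable (fun z : ℝ × ℝ => d z.1 * (ρ z.2 * w z.2)) (ν.prod ν) :=
    Integrable.mul_prod hd hρw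
  have i4 : Integrable (fun z : ℝ × ℝ => w z.1 * (ρ z.2 * d z.2)) (ν.prod ν) :=
    Integrable.mul_prod hw hρd
  have hΦint : Integrable
      (fun z : ℝ × ℝ => (ρ z.1 - ρ z.2) * (d z.1 * w z.2 - d z.2 * w z.1)) (ν.prod ν) :=
    (((i1.sub i2).sub i3).add i4).congr (ae_of_all _ fun z => by
      simp only [Pi.add_apply, Pi.sub_apply]; ring)
  have hae : ∀ᵐ z ∂(ν.prod ν),
      0 ≤ (ρ z.1 - ρ z.2) * (d z.1 * w z.2 - d z.2 * w z.1) := by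
    rw [hν, Measure.prod_restrict]
    filter_upwards [ae_restrict_mem (measurableSet_Ioi.prod measurableSet_Ioi)] with z hz
    exact hpt z.1 hz.1 z.2 hz.2
  have hnn : 0 ≤ ∫ z, (ρ z.1 - ρ z.2) * (d z.1 * w z.2 - d z.2 * w z.1) ∂(ν.prod ν) :=
    integral_nonneg_of_ae hae
  have hval : (∫ z, (ρ z.1 - ρ z.2) * (d z.1 * w z.2 - d z.2 * w z.1) ∂(ν.prod ν))
      = (∫ u, ρ u * d u ∂ν) * (∫ u, w u ∂ν) - (∫ u, ρ u * w u ∂ν) * (∫ u, d u ∂ν)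
        - (∫ u, d u ∂ν) * (∫ u, ρ u * w u ∂ν)
        + (∫ u, w u ∂ν) * (∫ u, ρ u * d u ∂ν) := by
    have i12 : Integrable (fun z : ℝ × ℝ =>
        (ρ z.1 * d z.1) * w z.2 - (ρ z.1 * w z.1) * d z.2) (ν.prod ν) :=
      (i1.sub i2).congr (ae_of_all _ fun z => by simp only [Pi.sub_apply])
    have i123 : Integrable (fun z : ℝ × ℝ =>
        (ρ z.1 * d z.1) * w z.2 - (ρ z.1 * w z.1) * d z.2 - d z.1 * (ρ z.2 * w z.2))
        (ν.prod ν) :=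
      (i12.sub i3).congr (ae_of_all _ fun z => by simp only [Pi.sub_apply])
    rw [show (fun z : ℝ × ℝ => (ρ z.1 - ρ z.2) * (d z.1 * w z.2 - d z.2 * w z.1))
        = (fun z : ℝ × ℝ => ((ρ z.1 * d z.1) * w z.2 - (ρ z.1 * w z.1) * d z.2
            - d z.1 * (ρ z.2 * w z.2)) + w z.1 * (ρ z.2 * d z.2)) from
      funext fun z => by ring]
    have e1 : (∫ z : ℝ × ℝ, (ρ z.1 * d z.1) * w z.2 ∂(ν.prod ν))
        = (∫ u, ρ u * d u ∂ν) * ∫ u, w u ∂ν := integral_prod_mul (fun u => ρ u * d u) w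
    have e2 : (∫ z : ℝ × ℝ, (ρ z.1 * w z.1) * d z.2 ∂(ν.prod ν))
        = (∫ u, ρ u * w u ∂ν) * ∫ u, d u ∂ν := integral_prod_mul (fun u => ρ u * w u) d
    have e3 : (∫ z : ℝ × ℝ, d z.1 * (ρ z.2 * w z.2) ∂(ν.prod ν))
        = (∫ u, d u ∂ν) * ∫ u, ρ u * w u ∂ν := integral_prod_mul d (fun u => ρ u * w u)
    have e4 : (∫ z : ℝ × ℝ, w z.1 * (ρ z.2 * d z.2) ∂(ν.prod ν))
        = (∫ u, w u ∂ν) * ∫ u, ρ u * d u ∂ν := integral_prod_mul w (fun u => ρ u * d u)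
    rw [integral_add i123 i4, integral_sub i12 i3,
      integral_sub i1 i2, e1, e2, e3, e4]
  rw [hval] at hnn
  linarith

/-! ### the log-concavity four-point inequality -/

lemma eps4 {fε : ℝ → ℝ} (hfε : IsDensity fε) (hεs : SymmAbout 0 fε)
    (hεlc : LogConcaveFn fε) {a u v : ℝ} (ha : 0 ≤ a) (hv : 0 ≤ v) (huv : v ≤ u) :
    fε (a + u) * fε (a - v) ≤ fε (a - u) * fε (a + v) := by
  have hx : v - a ≤ a + v := by linarith
  have hδ : (0:ℝ) ≤ u - v := by linarith
  have h := concave_increment hεlc (x₁ := v - a) (x₂ := a + v) (δ := u - v) hx hδ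
  rw [show a + v + (u - v) = a + u from by ring, show v - a + (u - v) = u - a from by ring] at h
  have e1 : Real.log (fε (v - a)) = Real.log (fε (a - v)) := by
    rw [show v - a = -(a - v) from by ring, even_pt hεs]
  have e2 : Real.log (fε (u - a)) = Real.log (fε (a - u)) := by
    rw [show u - a = -(a - u) from by ring, even_pt hεs]
  rw [e1, e2] at h
  calc fε (a + u) * fε (a - v)
      = Real.exp (Real.log (fε (a + u)) + Real.log (fε (a - v))) := by
        rw [Real.exp_add, Real.exp_log (hfε.1 _), Real.exp_log (hfε.1 _)]
    _ ≤ Real.exp (Real.log (fε (a - u)) + Real.log (fε (a + v))) :=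
        Real.exp_le_exp.mpr (by linarith)
    _ = fε (a - u) * fε (a + v) := by
        rw [Real.exp_add, Real.exp_log (hfε.1 _), Real.exp_log (hfε.1 _)]

/-! ### folded kernels -/

section Fold

variable {fε f : ℝ → ℝ} {μ : ℝ}

lemma qf_integrable (hfε : IsDensity fε) (hεs : SymmAbout 0 fε) (hεqc : QuasiConcaveFn fε)
    (hf : IsDensity f) (s : ℝ) :
    Integrable (fun t => f (μ + t) * fε ((s - μ) - t)) := by
  have h := (Kint_integrable hfε hεs hεqc hf s).comp_add_left μ
  exact h.congr (ae_of_all _ fun t => by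
    show f (μ + t) * fε (s - (μ + t)) = f (μ + t) * fε ((s - μ) - t)
    rw [show s - (μ + t) = (s - μ) - t from by ring])

lemma tqf_integrable (hfε : IsDensity fε) (hεs : SymmAbout 0 fε) (hεqc : QuasiConcaveFn fε)
    (hf : IsDensity f) (s : ℝ) :
    Integrable (fun t => t * (f (μ + t) * fε ((s - μ) - t))) := by
  have h0 : Integrable (fun x => (x - μ) * (f x * fε (s - x))) := by
    refine ((Nint_integrable hfε hεs hεqc hf s).sub
      ((Kint_integrable hfε hεs hεqc hf s).const_mul μ)).congr (ae_of_all _ fun x => ?_)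
    simp only [Pi.sub_apply]; ring
  have h := h0.comp_add_left μ
  exact h.congr (ae_of_all _ fun t => by
    show (μ + t - μ) * (f (μ + t) * fε (s - (μ + t))) = t * (f (μ + t) * fε ((s - μ) - t))
    rw [show s - (μ + t) = (s - μ) - t from by ring, show μ + t - μ = t from by ring])

lemma kernel_fold_w (hfε : IsDensity fε) (hεs : SymmAbout 0 fε) (hεqc : QuasiConcaveFn fε)
    (hf : IsDensity f) (hsym : SymmAbout μ f) (s : ℝ) :
    (∫ x, f x * fε (s - x))
      = ∫ u in Ioi (0:ℝ), f (μ + u) * (fε ((s - μ) - u) + fε ((s - μ) + u)) := by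
  have e1 : (∫ x, f x * fε (s - x)) = ∫ t, f (μ + t) * fε ((s - μ) - t) := by
    rw [← integral_add_left_eq_self (fun x => f x * fε (s - x)) μ]
    exact integral_congr_ae (ae_of_all _ fun t => by
      show f (μ + t) * fε (s - (μ + t)) = f (μ + t) * fε ((s - μ) - t)
      rw [show s - (μ + t) = (s - μ) - t from by ring])
  rw [e1, integral_fold (qf_integrable hfε hεs hεqc hf s)]
  refine setIntegral_congr_fun measurableSet_Ioi (fun u _ => ?_)
  have hfs : f (μ + -u) = f (μ + u) := by
    rw [show μ + -u = μ - u from by ring]; exact (hsym u).symm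
  rw [hfs, show (s - μ) - -u = (s - μ) + u from by ring]
  ring

lemma kernel_fold_d (hfε : IsDensity fε) (hεs : SymmAbout 0 fε) (hεqc : QuasiConcaveFn fε)
    (hf : IsDensity f) (hsym : SymmAbout μ f) (s : ℝ) :
    (∫ x, x * f x * fε (s - x)) - μ * (∫ x, f x * fε (s - x))
      = ∫ u in Ioi (0:ℝ), u * f (μ + u) * (fε ((s - μ) - u) - fε ((s - μ) + u)) := by
  have hKi := Kint_integrable hfε hεs hεqc hf s
  have hNi := Nint_integrable hfε hεs hεqc hf s
  have e0 : (∫ x, x * f x * fε (s - x)) - μ * ∫ x, f x * fε (s - x)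
      = ∫ x, (x - μ) * (f x * fε (s - x)) := by
    rw [show (∫ x, (x - μ) * (f x * fε (s - x)))
        = ∫ x, (x * f x * fε (s - x) - μ * (f x * fε (s - x))) from
      integral_congr_ae (ae_of_all _ fun x => by ring)]
    rw [integral_sub hNi (hKi.const_mul μ), integral_const_mul]
  have e1 : (∫ x, (x - μ) * (f x * fε (s - x)))
      = ∫ t, t * (f (μ + t) * fε ((s - μ) - t)) := by
    rw [← integral_add_left_eq_self (fun x => (x - μ) * (f x * fε (s - x))) μ]
    exact integral_congr_ae (ae_of_all _ fun t => by
      show (μ + t - μ) * (f (μ + t) * fε (s - (μ + t))) = t * (f (μ + t) * fε ((s - μ) - t))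
      rw [show s - (μ + t) = (s - μ) - t from by ring, show μ + t - μ = t from by ring])
  rw [e0, e1, integral_fold (tqf_integrable hfε hεs hεqc hf s)]
  refine setIntegral_congr_fun measurableSet_Ioi (fun u _ => ?_)
  have hfs : f (μ + -u) = f (μ + u) := by
    rw [show μ + -u = μ - u from by ring]; exact (hsym u).symm
  rw [hfs, show (s - μ) - -u = (s - μ) + u from by ring]
  ring

end Fold

/-! ### folded integrabilities on (0,∞) -/

section FoldInt

variable {fε f : ℝ → ℝ} {μ : ℝ}

lemma qf_neg_integrable (hfε : IsDensity fε) (hεs : SymmAbout 0 fε) (hεqc : QuasiConcaveFn fε)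
    (hf : IsDensity f) (hsym : SymmAbout μ f) (s : ℝ) :
    Integrable (fun t => f (μ + t) * fε ((s - μ) + t)) := by
  have h := (qf_integrable (μ := μ) hfε hεs hεqc hf s).comp_neg
  refine h.congr (ae_of_all _ fun t => ?_)
  show f (μ + -t) * fε ((s - μ) - -t) = f (μ + t) * fε ((s - μ) + t)
  rw [show μ + -t = μ - t from by ring, ← hsym t, show (s - μ) - -t = (s - μ) + t from by ring]

lemma tqf_neg_integrable (hfε : IsDensity fε) (hεs : SymmAbout 0 fε) (hεqc : QuasiConcaveFn fε)
    (hf : IsDensity f) (hsym : SymmAbout μ f) (s : ℝ) :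
    Integrable (fun t => t * (f (μ + t) * fε ((s - μ) + t))) := by
  have h := (tqf_integrable (μ := μ) hfε hεs hεqc hf s).comp_neg
  have h2 := h.neg
  refine h2.congr (ae_of_all _ fun t => ?_)
  show -(-t * (f (μ + -t) * fε ((s - μ) - -t))) = t * (f (μ + t) * fε ((s - μ) + t))
  rw [show μ + -t = μ - t from by ring, ← hsym t, show (s - μ) - -t = (s - μ) + t from by ring]
  ring

lemma wf_integrableOn (hfε : IsDensity fε) (hεs : SymmAbout 0 fε) (hεqc : QuasiConcaveFn fε)
    (hf : IsDensity f) (hsym : SymmAbout μ f) (s : ℝ) :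
    IntegrableOn (fun u => f (μ + u) * (fε ((s - μ) - u) + fε ((s - μ) + u))) (Ioi 0) := by
  have h := ((qf_integrable (μ := μ) hfε hεs hεqc hf s).add
    (qf_neg_integrable hfε hεs hεqc hf hsym s)).integrableOn (s := Ioi 0)
  refine h.congr (ae_of_all _ fun u => ?_)
  show f (μ + u) * fε ((s - μ) - u) + f (μ + u) * fε ((s - μ) + u)
      = f (μ + u) * (fε ((s - μ) - u) + fε ((s - μ) + u))
  ring

lemma df_integrableOn (hfε : IsDensity fε) (hεs : SymmAbout 0 fε) (hεqc : QuasiConcaveFn fε)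
    (hf : IsDensity f) (hsym : SymmAbout μ f) (s : ℝ) :
    IntegrableOn (fun u => u * f (μ + u) * (fε ((s - μ) - u) - fε ((s - μ) + u))) (Ioi 0) := by
  have h := ((tqf_integrable (μ := μ) hfε hεs hεqc hf s).sub
    (tqf_neg_integrable hfε hεs hεqc hf hsym s)).integrableOn (s := Ioi 0)
  refine h.congr (ae_of_all _ fun u => ?_)
  show u * (f (μ + u) * fε ((s - μ) - u)) - u * (f (μ + u) * fε ((s - μ) + u))
      = u * f (μ + u) * (fε ((s - μ) - u) - fε ((s - μ) + u))
  ring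

end FoldInt

/-! ### the pointwise comparison -/

lemma postMean_compare {fε fA fB : ℝ → ℝ} {μ : ℝ}
    (hfε : IsDensity fε) (hεs : SymmAbout 0 fε) (hεlc : LogConcaveFn fε)
    (hfA : IsDensity fA) (hAsym : SymmAbout μ fA)
    (hfB : IsDensity fB) (hBsym : SymmAbout μ fB)
    (hprec : MonotoneOn (fun x => fA (μ + x) / fB (μ + x)) (Set.Ioi 0))
    {s : ℝ} (hs : μ ≤ s) :
    postMean fB fε s ≤ postMean fA fε s := by
  have hεqc : QuasiConcaveFn fε := qc_of_lc hfε.1 hεlc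
  have ha : 0 ≤ s - μ := by linarith
  have hKA := kernel_fold_w hfε hεs hεqc hfA hAsym s
  have hKB := kernel_fold_w hfε hεs hεqc hfB hBsym s
  have hNA := kernel_fold_d hfε hεs hεqc hfA hAsym s
  have hNB := kernel_fold_d hfε hεs hεqc hfB hBsym s
  have hKApos := Kd_pos hfε hεs hεqc hfA s
  have hKBpos := Kd_pos hfε hεs hεqc hfB s
  -- pointwise relation between A- and B-kernels through the likelihood ratio ρ
  have hρw : ∀ u : ℝ, (fA (μ + u) / fB (μ + u))
      * (fB (μ + u) * (fε ((s - μ) - u) + fε ((s - μ) + u)))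
      = fA (μ + u) * (fε ((s - μ) - u) + fε ((s - μ) + u)) := by
    intro u
    field_simp [(hfB.1 (μ + u)).ne']
  have hρd : ∀ u : ℝ, (fA (μ + u) / fB (μ + u))
      * (u * fB (μ + u) * (fε ((s - μ) - u) - fε ((s - μ) + u)))
      = u * fA (μ + u) * (fε ((s - μ) - u) - fε ((s - μ) + u)) := by
    intro u
    field_simp [(hfB.1 (μ + u)).ne']
  -- Chebyshev
  have hcheb := chebyshev_Ioi
    (ρ := fun u => fA (μ + u) / fB (μ + u))
    (d := fun u => u * fB (μ + u) * (fε ((s - μ) - u) - fε ((s - μ) + u)))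
    (w := fun u => fB (μ + u) * (fε ((s - μ) - u) + fε ((s - μ) + u)))
    (df_integrableOn hfε hεs hεqc hfB hBsym s)
    (wf_integrableOn hfε hεs hεqc hfB hBsym s)
    ((df_integrableOn hfε hεs hεqc hfA hAsym s).congr (ae_of_all _ fun u => (hρd u).symm))
    ((wf_integrableOn hfε hεs hεqc hfA hAsym s).congr (ae_of_all _ fun u => (hρw u).symm))
    ?hpt
  case hpt =>
    have key : ∀ u v : ℝ, 0 < v → v ≤ u →
        0 ≤ ((fun u => fA (μ + u) / fB (μ + u)) u - (fun u => fA (μ + u) / fB (μ + u)) v)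
          * ((fun u => u * fB (μ + u) * (fε ((s - μ) - u) - fε ((s - μ) + u))) u
              * (fun u => fB (μ + u) * (fε ((s - μ) - u) + fε ((s - μ) + u))) v
            - (fun u => u * fB (μ + u) * (fε ((s - μ) - u) - fε ((s - μ) + u))) v
              * (fun u => fB (μ + u) * (fε ((s - μ) - u) + fε ((s - μ) + u))) u) := by
      intro u v hv huv
      have hu : 0 < u := lt_of_lt_of_le hv huv
      have hρuv : fA (μ + v) / fB (μ + v) ≤ fA (μ + u) / fB (μ + u) :=
        hprec (mem_Ioi.mpr hv) (mem_Ioi.mpr hu) huv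
      have h12 : fε ((s - μ) + u) ≤ fε ((s - μ) - u) := fε_anti' hεs hεqc ha hu.le
      have h34 : fε ((s - μ) + v) ≤ fε ((s - μ) - v) := fε_anti' hεs hεqc ha hv.le
      have h4pt : fε ((s - μ) + u) * fε ((s - μ) - v)
          ≤ fε ((s - μ) - u) * fε ((s - μ) + v) := eps4 hfε hεs hεlc ha hv.le huv
      have t1 : 0 ≤ (u - v) * ((fε ((s - μ) - u) - fε ((s - μ) + u))
          * (fε ((s - μ) - v) + fε ((s - μ) + v))) :=
        mul_nonneg (by linarith) (mul_nonneg (by linarith)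
          (le_of_lt (add_pos (hfε.1 _) (hfε.1 _))))
      have t2 : 0 ≤ v * (fε ((s - μ) - u) * fε ((s - μ) + v)
          - fε ((s - μ) + u) * fε ((s - μ) - v)) :=
        mul_nonneg hv.le (by linarith)
      have hinner : 0 ≤ u * (fε ((s - μ) - u) - fε ((s - μ) + u))
            * (fε ((s - μ) - v) + fε ((s - μ) + v))
          - v * (fε ((s - μ) - v) - fε ((s - μ) + v))
            * (fε ((s - μ) - u) + fε ((s - μ) + u)) := by nlinarith [t1, t2]
      simp only []
      refine mul_nonneg (by linarith) ?_
      have heq : (u * fB (μ + u) * (fε ((s - μ) - u) - fε ((s - μ) + u)))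
            * (fB (μ + v) * (fε ((s - μ) - v) + fε ((s - μ) + v)))
          - (v * fB (μ + v) * (fε ((s - μ) - v) - fε ((s - μ) + v)))
            * (fB (μ + u) * (fε ((s - μ) - u) + fε ((s - μ) + u)))
          = (fB (μ + u) * fB (μ + v))
            * (u * (fε ((s - μ) - u) - fε ((s - μ) + u))
                * (fε ((s - μ) - v) + fε ((s - μ) + v))
              - v * (fε ((s - μ) - v) - fε ((s - μ) + v))
                * (fε ((s - μ) - u) + fε ((s - μ) + u))) := by ring
      rw [heq]
      exact mul_nonneg (mul_pos (hfB.1 _) (hfB.1 _)).le hinner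
    intro u hu v hv
    rcases le_total v u with h | h
    · exact key u v (mem_Ioi.mp hv) h
    · have hk := key v u (mem_Ioi.mp hu) h
      have : ((fun u => fA (μ + u) / fB (μ + u)) u - (fun u => fA (μ + u) / fB (μ + u)) v)
          * ((fun u => u * fB (μ + u) * (fε ((s - μ) - u) - fε ((s - μ) + u))) u
              * (fun u => fB (μ + u) * (fε ((s - μ) - u) + fε ((s - μ) + u))) v
            - (fun u => u * fB (μ + u) * (fε ((s - μ) - u) - fε ((s - μ) + u))) v
              * (fun u => fB (μ + u) * (fε ((s - μ) - u) + fε ((s - μ) + u))) u)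
          = ((fun u => fA (μ + u) / fB (μ + u)) v - (fun u => fA (μ + u) / fB (μ + u)) u)
          * ((fun u => u * fB (μ + u) * (fε ((s - μ) - u) - fε ((s - μ) + u))) v
              * (fun u => fB (μ + u) * (fε ((s - μ) - u) + fε ((s - μ) + u))) u
            - (fun u => u * fB (μ + u) * (fε ((s - μ) - u) - fε ((s - μ) + u))) u
              * (fun u => fB (μ + u) * (fε ((s - μ) - u) + fε ((s - μ) + u))) v) := by
        simp only []; ring
      rw [this]
      exact hk
  -- conclude
  have hwA : (∫ u in Ioi (0:ℝ), (fun u => fA (μ + u) / fB (μ + u)) u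
      * (fB (μ + u) * (fε ((s - μ) - u) + fε ((s - μ) + u))))
      = ∫ u in Ioi (0:ℝ), fA (μ + u) * (fε ((s - μ) - u) + fε ((s - μ) + u)) :=
    setIntegral_congr_fun measurableSet_Ioi (fun u _ => hρw u)
  have hdA : (∫ u in Ioi (0:ℝ), (fun u => fA (μ + u) / fB (μ + u)) u
      * (u * fB (μ + u) * (fε ((s - μ) - u) - fε ((s - μ) + u))))
      = ∫ u in Ioi (0:ℝ), u * fA (μ + u) * (fε ((s - μ) - u) - fε ((s - μ) + u)) :=
    setIntegral_congr_fun measurableSet_Ioi (fun u _ => hρd u)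
  rw [hwA, hdA] at hcheb
  rw [← hKA, ← hKB, ← hNA, ← hNB] at hcheb
  rw [postMean, postMean, div_le_div_iff₀ hKBpos hKApos]
  nlinarith [hcheb, hKApos, hKBpos]

/-! ### averaging layer -/

section Avg

variable {fε f : ℝ → ℝ} {μ : ℝ}

lemma noise_shift_integrable (hfε : IsDensity fε) (x : ℝ) :
    Integrable (fun s => fε (s - x)) := (dens_integrable hfε).comp_sub_right x

lemma noise_shift_one (hfε : IsDensity fε) (x : ℝ) :
    (∫ s, fε (s - x)) = 1 := by
  rw [integral_sub_right_eq_self fε x, hfε.2.2.1]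

lemma avg_integrable (hfε : IsDensity fε) (hεs : SymmAbout 0 fε) (hεqc : QuasiConcaveFn fε)
    (hf : IsDensity f) (hsym : SymmAbout μ f) (hqc : QuasiConcaveFn f) (x : ℝ) :
    Integrable (fun s => postMean f fε s * fε (s - x)) := by
  have b1 := noise_shift_integrable hfε x
  have b2 : Integrable (fun s => |s - x| * fε (s - x)) := (hfε.2.2.2).comp_sub_right x
  have b3 : Integrable (fun s => |s - μ| * fε (s - x)) := by
    refine (b2.add (b1.const_mul |x - μ|)).mono' ?_ ?_
    · exact ((continuous_id.sub continuous_const).abs.mul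
        ((dens_cont hfε).comp (continuous_id.sub continuous_const))).aestronglyMeasurable
    · filter_upwards with s
      simp only [Pi.add_apply]
      rw [Real.norm_eq_abs, abs_mul, abs_abs, abs_of_nonneg (hfε.1 _).le]
      have h1 : |s - μ| ≤ |s - x| + |x - μ| := by
        have := abs_sub_abs_le_abs_sub (s - μ) (s - x)
        calc |s - μ| = |(s - x) + (x - μ)| := by ring_nf
          _ ≤ |s - x| + |x - μ| := abs_add_le _ _
      nlinarith [hfε.1 (s - x), abs_nonneg (s - x), abs_nonneg (x - μ)]
  refine ((b1.const_mul |μ|).add b3).mono' ?_ ?_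
  · exact ((postMean_cont hfε hεs hεqc hf).mul
      ((dens_cont hfε).comp (continuous_id.sub continuous_const))).aestronglyMeasurable
  · filter_upwards with s
    simp only [Pi.add_apply]
    rw [Real.norm_eq_abs, abs_mul, abs_of_nonneg (hfε.1 _).le]
    have h1 : |postMean f fε s| ≤ |μ| + |s - μ| := by
      have := postMean_absbd hfε hεs hεqc hf hsym hqc s
      calc |postMean f fε s| = |μ + (postMean f fε s - μ)| := by ring_nf
        _ ≤ |μ| + |postMean f fε s - μ| := abs_add_le _ _
        _ ≤ |μ| + |s - μ| := by linarith
    nlinarith [hfε.1 (s - x), abs_nonneg μ, abs_nonneg (s - μ)]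

/-- generic representation of `∫ G(s) fε(s-x) ds` as a folded integral, for `G` odd about `μ`. -/
lemma repr_G (hfε : IsDensity fε) (hεs : SymmAbout 0 fε)
    {G : ℝ → ℝ} {x : ℝ} (hGint : Integrable (fun s => G s * fε (s - x)))
    (hGodd : ∀ s, G (2*μ - s) = -G s) :
    (∫ s, G s * fε (s - x))
        = (∫ t in Ioi (0:ℝ), G (μ + t) * (fε (t - (x - μ)) - fε (t + (x - μ))))
      ∧ IntegrableOn (fun t => G (μ + t) * (fε (t - (x - μ)) - fε (t + (x - μ)))) (Ioi 0) := by
  have hH : Integrable (fun t => G (μ + t) * fε (t - (x - μ))) := by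
    refine (hGint.comp_add_left μ).congr (ae_of_all _ fun t => ?_)
    show G (μ + t) * fε (μ + t - x) = G (μ + t) * fε (t - (x - μ))
    rw [show μ + t - x = t - (x - μ) from by ring]
  have e1 : (∫ s, G s * fε (s - x)) = ∫ t, G (μ + t) * fε (t - (x - μ)) := by
    rw [← integral_add_left_eq_self (fun s => G s * fε (s - x)) μ]
    exact integral_congr_ae (ae_of_all _ fun t => by
      show G (μ + t) * fε (μ + t - x) = G (μ + t) * fε (t - (x - μ))
      rw [show μ + t - x = t - (x - μ) from by ring])
  have hpt : ∀ t : ℝ, G (μ + t) * fε (t - (x - μ)) + G (μ + -t) * fε (-t - (x - μ))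
      = G (μ + t) * (fε (t - (x - μ)) - fε (t + (x - μ))) := by
    intro t
    have hG : G (μ + -t) = -G (μ + t) := by
      rw [show μ + -t = 2*μ - (μ + t) from by ring, hGodd (μ + t)]
    have hfe : fε (-t - (x - μ)) = fε (t + (x - μ)) := by
      rw [show -t - (x - μ) = -(t + (x - μ)) from by ring, even_pt hεs]
    rw [hG, hfe]
    ring
  constructor
  · rw [e1, integral_fold hH]
    exact setIntegral_congr_fun measurableSet_Ioi (fun t _ => hpt t)
  · have h2 : Integrable (fun t => G (μ + -t) * fε (-t - (x - μ))) := hH.comp_neg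
    refine ((hH.add h2).integrableOn (s := Ioi 0)).congr (ae_of_all _ fun t => ?_)
    exact hpt t

lemma avg_reflect (hfε : IsDensity fε) (hεs : SymmAbout 0 fε) (hεqc : QuasiConcaveFn fε)
    (hf : IsDensity f) (hsym : SymmAbout μ f) (hqc : QuasiConcaveFn f) (x : ℝ) :
    (∫ s, postMean f fε s * fε (s - (2*μ - x)))
      = 2*μ - ∫ s, postMean f fε s * fε (s - x) := by
  have h := integral_sub_left_eq_self
    (fun s => postMean f fε s * fε (s - (2*μ - x))) volume (2*μ)
  rw [← h]
  have e : ∀ s : ℝ, postMean f fε (2*μ - s) * fε ((2*μ - s) - (2*μ - x))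
      = 2*μ * fε (s - x) - postMean f fε s * fε (s - x) := by
    intro s
    rw [postMean_reflect hfε hεs hεqc hf hsym s,
      show (2*μ - s) - (2*μ - x) = -(s - x) from by ring, even_pt hεs]
    ring
  rw [show (∫ s, postMean f fε (2*μ - s) * fε ((2*μ - s) - (2*μ - x)))
      = ∫ s, (2*μ * fε (s - x) - postMean f fε s * fε (s - x)) from
    integral_congr_ae (ae_of_all _ fun s => e s)]
  rw [integral_sub ((noise_shift_integrable hfε x).const_mul _)
    (avg_integrable hfε hεs hεqc hf hsym hqc x), integral_const_mul,
    noise_shift_one hfε x]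
  ring

end Avg

/-! ### main lemma, right of the mean -/

lemma main_ge {fε fA fB : ℝ → ℝ} {μ : ℝ}
    (hfε : IsDensity fε) (hεs : SymmAbout 0 fε) (hεlc : LogConcaveFn fε)
    (hfA : IsDensity fA) (hAsym : SymmAbout μ fA) (hAqc : QuasiConcaveFn fA)
    (hfB : IsDensity fB) (hBsym : SymmAbout μ fB) (hBqc : QuasiConcaveFn fB)
    (hprec : MonotoneOn (fun x => fA (μ + x) / fB (μ + x)) (Set.Ioi 0))
    {x : ℝ} (hx : μ ≤ x) :
    (∫ s, postMean fA fε s * fε (s - x)) ≤ x ∧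
    (∫ s, postMean fB fε s * fε (s - x)) ≤ (∫ s, postMean fA fε s * fε (s - x)) ∧
    μ ≤ ∫ s, postMean fB fε s * fε (s - x) := by
  have hεqc : QuasiConcaveFn fε := qc_of_lc hfε.1 hεlc
  have b1 := noise_shift_integrable hfε x
  have iA := avg_integrable hfε hεs hεqc hfA hAsym hAqc x
  have iB := avg_integrable hfε hεs hεqc hfB hBsym hBqc x
  have ffac : ∀ t ∈ Ioi (0:ℝ), 0 ≤ fε (t - (x - μ)) - fε (t + (x - μ)) := by
    intro t ht
    exact sub_nonneg.mpr (fε_anti' hεs hεqc (mem_Ioi.mp ht).le (by linarith))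
  -- claim 3 : μ ≤ avgB
  have claim3 : μ ≤ ∫ s, postMean fB fε s * fε (s - x) := by
    have hGint : Integrable (fun s => (postMean fB fε s - μ) * fε (s - x)) :=
      (iB.sub (b1.const_mul μ)).congr (ae_of_all _ fun s => by
        simp only [Pi.sub_apply]; ring)
    have hGodd : ∀ s, (postMean fB fε (2*μ - s) - μ) = -(postMean fB fε s - μ) := by
      intro s; rw [postMean_reflect hfε hεs hεqc hfB hBsym s]; ring
    obtain ⟨hrep, _⟩ := repr_G hfε hεs (G := fun s => postMean fB fε s - μ) hGint hGodd
    have hval : (∫ s, (postMean fB fε s - μ) * fε (s - x))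
        = (∫ s, postMean fB fε s * fε (s - x)) - μ := by
      rw [show (∫ s, (postMean fB fε s - μ) * fε (s - x))
          = ∫ s, (postMean fB fε s * fε (s - x) - μ * fε (s - x)) from
        integral_congr_ae (ae_of_all _ fun s => by ring)]
      rw [integral_sub iB (b1.const_mul μ), integral_const_mul, noise_shift_one hfε x]
      ring
    have hnn : 0 ≤ ∫ t in Ioi (0:ℝ),
        (postMean fB fε (μ + t) - μ) * (fε (t - (x - μ)) - fε (t + (x - μ))) := by
      refine setIntegral_nonneg measurableSet_Ioi (fun t ht => ?_)
      refine mul_nonneg (sub_nonneg.mpr ?_) (ffac t ht)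
      exact postMean_ge hfε hεs hεqc hfB hBsym (by linarith [(mem_Ioi.mp ht)])
    rw [hval] at hrep
    linarith [hrep ▸ hnn]
  -- claim 2 : avgB ≤ avgA
  have claim2 : (∫ s, postMean fB fε s * fε (s - x))
      ≤ ∫ s, postMean fA fε s * fε (s - x) := by
    have hGint : Integrable (fun s => (postMean fA fε s - postMean fB fε s) * fε (s - x)) :=
      (iA.sub iB).congr (ae_of_all _ fun s => by simp only [Pi.sub_apply]; ring)
    have hGodd : ∀ s, (postMean fA fε (2*μ - s) - postMean fB fε (2*μ - s))
        = -(postMean fA fε s - postMean fB fε s) := by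
      intro s
      rw [postMean_reflect hfε hεs hεqc hfA hAsym s, postMean_reflect hfε hεs hεqc hfB hBsym s]
      ring
    obtain ⟨hrep, _⟩ := repr_G hfε hεs
      (G := fun s => postMean fA fε s - postMean fB fε s) hGint hGodd
    have hval : (∫ s, (postMean fA fε s - postMean fB fε s) * fε (s - x))
        = (∫ s, postMean fA fε s * fε (s - x)) - ∫ s, postMean fB fε s * fε (s - x) := by
      rw [show (∫ s, (postMean fA fε s - postMean fB fε s) * fε (s - x))
          = ∫ s, (postMean fA fε s * fε (s - x) - postMean fB fε s * fε (s - x)) from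
        integral_congr_ae (ae_of_all _ fun s => by ring)]
      exact integral_sub iA iB
    have hnn : 0 ≤ ∫ t in Ioi (0:ℝ),
        (postMean fA fε (μ + t) - postMean fB fε (μ + t))
          * (fε (t - (x - μ)) - fε (t + (x - μ))) := by
      refine setIntegral_nonneg measurableSet_Ioi (fun t ht => ?_)
      refine mul_nonneg (sub_nonneg.mpr ?_) (ffac t ht)
      exact postMean_compare hfε hεs hεlc hfA hAsym hfB hBsym hprec
        (by linarith [(mem_Ioi.mp ht)])
    rw [hval] at hrep
    linarith [hrep ▸ hnn]
  -- claim 1 : avgA ≤ x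
  have claim1 : (∫ s, postMean fA fε s * fε (s - x)) ≤ x := by
    have i_s : Integrable (fun s => s * fε (s - x)) := by
      refine (((dens_xmul_integrable hfε).comp_sub_right x).add
        (b1.const_mul x)).congr (ae_of_all _ fun s => ?_)
      simp only [Pi.add_apply]; ring
    have hGint : Integrable (fun s => (s - postMean fA fε s) * fε (s - x)) :=
      (i_s.sub iA).congr (ae_of_all _ fun s => by simp only [Pi.sub_apply]; ring)
    have hGodd : ∀ s, ((2*μ - s) - postMean fA fε (2*μ - s))
        = -(s - postMean fA fε s) := by
      intro s; rw [postMean_reflect hfε hεs hεqc hfA hAsym s]; ring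
    obtain ⟨hrep, _⟩ := repr_G hfε hεs (G := fun s => s - postMean fA fε s) hGint hGodd
    have hx0 : (∫ s, s * fε (s - x)) = x := by
      rw [← integral_add_right_eq_self (fun s => s * fε (s - x)) x]
      rw [show (∫ u, (u + x) * fε (u + x - x))
          = ∫ u, (u * fε u + x * fε u) from
        integral_congr_ae (ae_of_all _ fun u => by
          show (u + x) * fε (u + x - x) = u * fε u + x * fε u
          rw [show u + x - x = u from by ring]; ring)]
      rw [integral_add (dens_xmul_integrable hfε) ((dens_integrable hfε).const_mul x),
        integral_const_mul, hfε.2.2.1,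
        integral_odd_eq_zero (G := fun u => u * fε u) (fun u => by
          show -u * fε (-u) = -(u * fε u)
          rw [even_pt hεs]; ring)]
      ring
    have hval : (∫ s, (s - postMean fA fε s) * fε (s - x))
        = x - ∫ s, postMean fA fε s * fε (s - x) := by
      rw [show (∫ s, (s - postMean fA fε s) * fε (s - x))
          = ∫ s, (s * fε (s - x) - postMean fA fε s * fε (s - x)) from
        integral_congr_ae (ae_of_all _ fun s => by ring)]
      rw [integral_sub i_s iA, hx0]
    have hnn : 0 ≤ ∫ t in Ioi (0:ℝ),
        ((μ + t) - postMean fA fε (μ + t)) * (fε (t - (x - μ)) - fε (t + (x - μ))) := by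
      refine setIntegral_nonneg measurableSet_Ioi (fun t ht => ?_)
      refine mul_nonneg (sub_nonneg.mpr ?_) (ffac t ht)
      exact postMean_le hfε hεs hεqc hfA hAsym hAqc (by linarith [(mem_Ioi.mp ht)])
    rw [hval] at hrep
    linarith [hrep ▸ hnn]
  exact ⟨claim1, claim2, claim3⟩

end P3

/-- Proposition 3: a more precise prior brings the average posterior mean closer
to the prior mean. -/
theorem prior_precision_average_posterior
    (fε fA fB : ℝ → ℝ) (μ : ℝ)
    (hfε : IsDensity fε) (hfεsym : SymmAbout 0 fε) (hfεlc : LogConcaveFn fε)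
    (hfA : IsDensity fA) (hfAsym : SymmAbout μ fA) (hfAqc : QuasiConcaveFn fA)
    (hfB : IsDensity fB) (hfBsym : SymmAbout μ fB) (hfBqc : QuasiConcaveFn fB)
    (hμA : μ = ∫ x, x * fA x) (hμB : μ = ∫ x, x * fB x)
    (hprec : MonotoneOn (fun x => fA (μ + x) / fB (μ + x)) (Set.Ioi 0)) :
    (∀ x, μ ≤ x →
        (∫ s, postMean fA fε s * fε (s - x)) ≤ x ∧
        (∫ s, postMean fB fε s * fε (s - x)) ≤ ∫ s, postMean fA fε s * fε (s - x) ∧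
        μ ≤ ∫ s, postMean fB fε s * fε (s - x)) ∧
    (∀ x ≤ μ,
        x ≤ ∫ s, postMean fA fε s * fε (s - x) ∧
        (∫ s, postMean fA fε s * fε (s - x)) ≤ ∫ s, postMean fB fε s * fε (s - x) ∧
        (∫ s, postMean fB fε s * fε (s - x)) ≤ μ) := by
  have hεqc : QuasiConcaveFn fε := P3.qc_of_lc hfε.1 hfεlc
  constructor
  · intro x hx
    exact P3.main_ge hfε hfεsym hfεlc hfA hfAsym hfAqc hfB hfBsym hfBqc hprec hx
  · intro x hx
    have hx' : μ ≤ 2*μ - x := by linarith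
    obtain ⟨h1, h2, h3⟩ :=
      P3.main_ge hfε hfεsym hfεlc hfA hfAsym hfAqc hfB hfBsym hfBqc hprec hx'
    rw [P3.avg_reflect hfε hfεsym hεqc hfA hfAsym hfAqc x] at h1 h2
    rw [P3.avg_reflect hfε hfεsym hεqc hfB hfBsym hfBqc x] at h2 h3
    exact ⟨by linarith, by linarith, by linarith⟩
end
end

section
/- Single-crossing of posterior asymmetries (Lemma 2). Let f_X be a density symmetric about its mean μ < 0 with log f_X strictly concave, and let f_ε and f_ε̃ be quasi-concave densities symmetric about 0 such that x ↦ f_ε(x)/f_ε̃(x) is strictly decreasing on (0,∞). Define the posterior densities at signal realization 0: p(x) := f_X(x)·f_ε̃(x) / ∫ f_X(u)·f_ε̃(u) du and q(x) := f_X(x)·f_ε(x) / ∫ f_X(u)·f_ε(u) du. Then there exists c > 0 such that for all x ∈ (0,c), (q(−x) − q(x)) − (p(−x) − p(x)) > 0, and for all x > c, (q(−x) − q(x)) − (p(−x) − p(x)) < 0. -/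
open MeasureTheory Real Set

noncomputable section

/-- Posterior density at signal realization 0, under prior `fX` and noise density `fn`. -/
def postDensity0 (fX fn : ℝ → ℝ) (x : ℝ) : ℝ := fX x * fn x / ∫ u, fX u * fn u

/-- A positive integrable quasi-concave function is eventually below `f 0` on the right. -/
lemma qc_right_tail {f : ℝ → ℝ} (hpos : ∀ x, 0 < f x)
    (hint : Integrable f) (hqc : QuasiConcaveFn f) :
    ∃ R : ℝ, 0 < R ∧ ∀ x, R ≤ x → f x ≤ f 0 := by
  by_contra h
  push_neg at h
  have key : ∀ y, 0 ≤ y → f 0 ≤ f y := by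
    intro y hy
    obtain ⟨x, hx1, hx2⟩ := h (max y 1) (lt_of_lt_of_le one_pos (le_max_right y 1))
    have hxpos : 0 < x := lt_of_lt_of_le one_pos ((le_max_right y 1).trans hx1)
    have hyx : y ≤ x := (le_max_left y 1).trans hx1
    have ht0 : 0 ≤ y / x := div_nonneg hy hxpos.le
    have ht1 : y / x ≤ 1 := (div_le_one hxpos).2 hyx
    have hq := hqc x 0 (y / x) ht0 ht1
    rw [mul_zero, add_zero, div_mul_cancel₀ y hxpos.ne'] at hq
    calc f 0 = min (f x) (f 0) := (min_eq_right hx2.le).symm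
      _ ≤ f y := hq
  have hconst : IntegrableOn (fun _ : ℝ => f 0) (Ici 0) volume := by
    apply Integrable.mono' (hint.restrict (s := Ici 0)) aestronglyMeasurable_const
    filter_upwards [ae_restrict_mem measurableSet_Ici] with a ha
    rw [Real.norm_eq_abs, abs_of_pos (hpos 0)]
    exact key a ha
  rcases (integrableOn_const_iff (C := f 0) enorm_ne_top).1 hconst with h0 | hfin
  · exact (hpos 0).ne' (enorm_eq_zero.1 h0)
  · rw [Real.volume_Ici] at hfin
    exact absurd hfin (by simp)

/-- A positive continuous integrable quasi-concave function is bounded. -/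
lemma bdd_of_qc {f : ℝ → ℝ} (hpos : ∀ x, 0 < f x) (hcont : Continuous f)
    (hint : Integrable f) (hqc : QuasiConcaveFn f) : ∃ C, ∀ x, f x ≤ C := by
  obtain ⟨R1, hR1pos, hR1⟩ := qc_right_tail hpos hint hqc
  have hqc' : QuasiConcaveFn (fun x => f (-x)) := by
    intro x y t ht0 ht1
    have h := hqc (-x) (-y) t ht0 ht1
    have heq : t * -x + (1 - t) * -y = -(t * x + (1 - t) * y) := by ring
    rw [heq] at h
    exact h
  obtain ⟨R2, hR2pos, hR2⟩ := qc_right_tail (f := fun x => f (-x))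
    (fun x => hpos (-x)) hint.comp_neg hqc'
  obtain ⟨z, hz, hmax⟩ := isCompact_Icc.exists_isMaxOn (s := Icc (-R2) R1)
    ⟨0, by constructor <;> linarith⟩ hcont.continuousOn
  refine ⟨max (f 0) (f z), fun x => ?_⟩
  rcases le_or_gt x R1 with hx1 | hx1
  · rcases le_or_gt (-R2) x with hx2 | hx2
    · exact le_max_of_le_right (hmax ⟨hx2, hx1⟩)
    · have h := hR2 (-x) (by linarith)
      simp only [neg_neg, neg_zero] at h
      exact le_max_of_le_left h
  · exact le_max_of_le_left (hR1 x hx1.le)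

/-- Strictly log-concave symmetric function: farther from the center means strictly smaller. -/
lemma symm_sc_lt {f : ℝ → ℝ} {μ : ℝ} (hpos : ∀ x, 0 < f x) (hsym : SymmAbout μ f)
    (hsc : StrictConcaveOn ℝ Set.univ fun x => Real.log (f x)) {a b : ℝ}
    (hab : |a - μ| < |b - μ|) : f b < f a := by
  set g := fun x => Real.log (f x) with hg
  have hsymg : ∀ x, g (μ + x) = g (μ - x) := fun x => by simp only [hg, hsym x]
  have hga : ∀ x : ℝ, g x = g (μ + |x - μ|) := by
    intro x
    rcases le_or_gt μ x with h | h
    · rw [abs_of_nonneg (by linarith)]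
      congr 1
      ring
    · rw [abs_of_neg (by linarith)]
      have h2 := hsymg (μ - x)
      rw [show μ - (μ - x) = x by ring] at h2
      rw [← h2]
      congr 1
      ring
  have key : g (μ + |b - μ|) < g (μ + |a - μ|) := by
    set s := |a - μ| with hs'
    set t := |b - μ| with ht'
    have hs : 0 ≤ s := abs_nonneg _
    have hst : s < t := hab
    have ht : 0 < t := lt_of_le_of_lt hs hst
    have hne : (μ - t) ≠ (μ + t) := by intro hcc; nlinarith
    have hθ1 : 0 < (t - s) / (2 * t) := div_pos (by linarith) (by linarith)
    have hθ2 : 0 < (t + s) / (2 * t) := div_pos (by linarith) (by linarith)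
    have hθs : (t - s) / (2 * t) + (t + s) / (2 * t) = 1 := by field_simp; ring
    have h2 := hsc.2 (mem_univ (μ - t)) (mem_univ (μ + t)) hne hθ1 hθ2 hθs
    simp only [smul_eq_mul] at h2
    rw [show (t - s) / (2 * t) * (μ - t) + (t + s) / (2 * t) * (μ + t) = μ + s by
      field_simp; ring] at h2
    have heq : (t - s) / (2 * t) * g (μ - t) + (t + s) / (2 * t) * g (μ + t) = g (μ + t) := by
      rw [← hsymg t]
      field_simp
      ring
    rw [heq] at h2
    exact h2
  have hlog : g b < g a := by rw [hga a, hga b]; exact key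
  exact (Real.log_lt_log_iff (hpos b) (hpos a)).1 hlog

/-- Lemma 2: single-crossing of posterior asymmetries. -/
theorem single_crossing_posterior_asymmetries
    (fX fε fε' : ℝ → ℝ) (μ : ℝ) (hμneg : μ < 0)
    (hfX : IsDensity fX) (hfXsym : SymmAbout μ fX) (hμ : μ = ∫ x, x * fX x)
    (hfXsc : StrictConcaveOn ℝ Set.univ fun x => Real.log (fX x))
    (hfε : IsDensity fε) (hfεsym : SymmAbout 0 fε) (hfεqc : QuasiConcaveFn fε)
    (hfε' : IsDensity fε') (hfε'sym : SymmAbout 0 fε') (hfε'qc : QuasiConcaveFn fε')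
    (hratio : StrictAntiOn (fun x => fε x / fε' x) (Set.Ioi 0)) :
    ∃ c : ℝ, 0 < c ∧
      (∀ x ∈ Set.Ioo 0 c,
        0 < (postDensity0 fX fε (-x) - postDensity0 fX fε x) -
            (postDensity0 fX fε' (-x) - postDensity0 fX fε' x)) ∧
      (∀ x, c < x →
        (postDensity0 fX fε (-x) - postDensity0 fX fε x) -
            (postDensity0 fX fε' (-x) - postDensity0 fX fε' x) < 0) := by
  obtain ⟨hXpos, hXcd, hXint1, -⟩ := hfX
  obtain ⟨hεpos, hεcd, hεint1, -⟩ := hfε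
  obtain ⟨hε'pos, hε'cd, hε'int1, -⟩ := hfε'
  have hXcont : Continuous fX := hXcd.continuous
  have hεcont : Continuous fε := hεcd.continuous
  have hε'cont : Continuous fε' := hε'cd.continuous
  have hXint : Integrable fX := by
    by_contra h; rw [integral_undef h] at hXint1; exact one_ne_zero hXint1.symm
  have hεint : Integrable fε := by
    by_contra h; rw [integral_undef h] at hεint1; exact one_ne_zero hεint1.symm
  have hε'int : Integrable fε' := by
    by_contra h; rw [integral_undef h] at hε'int1; exact one_ne_zero hε'int1.symm
  have hεeven : ∀ x : ℝ, fε (-x) = fε x := fun x => by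
    have := hfεsym x; simp only [zero_add, zero_sub] at this; exact this.symm
  have hε'even : ∀ x : ℝ, fε' (-x) = fε' x := fun x => by
    have := hfε'sym x; simp only [zero_add, zero_sub] at this; exact this.symm
  obtain ⟨Cε, hCε⟩ := bdd_of_qc hεpos hεcont hεint hfεqc
  obtain ⟨Cε', hCε'⟩ := bdd_of_qc hε'pos hε'cont hε'int hfε'qc
  have hIqint : Integrable (fun u => fX u * fε u) := by
    have h := hXint.bdd_mul hεcont.aestronglyMeasurable
      (c := Cε) (Filter.Eventually.of_forall fun x => by rw [Real.norm_eq_abs, abs_of_pos (hεpos x)]; exact hCε x)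
    simpa [mul_comm] using h
  have hIpint : Integrable (fun u => fX u * fε' u) := by
    have h := hXint.bdd_mul hε'cont.aestronglyMeasurable
      (c := Cε') (Filter.Eventually.of_forall fun x => by rw [Real.norm_eq_abs, abs_of_pos (hε'pos x)]; exact hCε' x)
    simpa [mul_comm] using h
  set Iq := ∫ u, fX u * fε u with hIqd
  set Ip := ∫ u, fX u * fε' u with hIpd
  have hIq : 0 < Iq := by
    rw [hIqd, integral_pos_iff_support_of_nonneg
      (fun x => (mul_pos (hXpos x) (hεpos x)).le) hIqint]
    rw [show Function.support (fun u => fX u * fε u) = univ from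
      eq_univ_of_forall fun x => (mul_pos (hXpos x) (hεpos x)).ne']
    simp [Real.volume_univ]
  have hIp : 0 < Ip := by
    rw [hIpd, integral_pos_iff_support_of_nonneg
      (fun x => (mul_pos (hXpos x) (hε'pos x)).le) hIpint]
    rw [show Function.support (fun u => fX u * fε' u) = univ from
      eq_univ_of_forall fun x => (mul_pos (hXpos x) (hε'pos x)).ne']
    simp [Real.volume_univ]
  set k := Iq / Ip with hkd
  have hkIp : k * Ip = Iq := by rw [hkd]; field_simp
  have hconst : (∀ x, fε x = k * fε' x) → False := by
    intro hall
    have h1 : fε 1 / fε' 1 = k := by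
      rw [hall 1, mul_div_assoc, div_self (hε'pos 1).ne', mul_one]
    have h2 : fε 2 / fε' 2 = k := by
      rw [hall 2, mul_div_assoc, div_self (hε'pos 2).ne', mul_one]
    have h3 := hratio (mem_Ioi.2 one_pos) (mem_Ioi.2 two_pos) one_lt_two
    simp only at h3
    rw [h1, h2] at h3
    exact lt_irrefl k h3
  have hzero : ∀ h : ℝ → ℝ, Continuous h → (∀ x, 0 ≤ h x) → Integrable h →
      (∫ x, h x) = 0 → ∀ x, h x = 0 := by
    intro h hc hnn hi hz
    have hae := (integral_eq_zero_iff_of_nonneg hnn hi).1 hz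
    have heq := (Continuous.ae_eq_iff_eq volume hc continuous_const).1 hae
    exact fun x => congrFun heq x
  have existsa : ∃ a, 0 < a ∧ k < fε a / fε' a := by
    by_contra hcon
    push_neg at hcon
    have hpos' : ∀ x, 0 < x → fε x ≤ k * fε' x := fun x hx =>
      (div_le_iff₀ (hε'pos x)).1 (hcon x hx)
    have hle : ∀ x, fε x ≤ k * fε' x := by
      intro x
      rcases lt_trichotomy x 0 with hx | hx | hx
      · have h := hpos' (-x) (by linarith)
        rwa [hεeven x, hε'even x] at h
      · subst hx
        have htend : Filter.Tendsto (fun y => k * fε' y - fε y) (nhdsWithin 0 (Ioi 0))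
            (nhds (k * fε' 0 - fε 0)) :=
          ((continuous_const.mul hε'cont).sub hεcont).continuousWithinAt
        have hev : ∀ᶠ y in nhdsWithin 0 (Ioi 0), (0:ℝ) ≤ k * fε' y - fε y := by
          filter_upwards [self_mem_nhdsWithin] with y hy
          have := hpos' y hy
          linarith
        have := ge_of_tendsto htend hev
        linarith
      · exact hpos' x hx
    have hint2 : Integrable (fun x => fX x * (k * fε' x - fε x)) := by
      have heq : (fun x => fX x * (k * fε' x - fε x)) =
          fun x => k * (fX x * fε' x) - fX x * fε x := by funext x; ring
      rw [heq]
      exact (hIpint.const_mul k).sub hIqint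
    have hz : (∫ x, fX x * (k * fε' x - fε x)) = 0 := by
      have heq : (fun x => fX x * (k * fε' x - fε x)) =
          fun x => k * (fX x * fε' x) - fX x * fε x := by funext x; ring
      rw [heq, integral_sub (hIpint.const_mul k) hIqint, integral_const_mul,
        ← hIpd, ← hIqd, hkIp, sub_self]
    have hall := hzero (fun x => fX x * (k * fε' x - fε x)) (hXcont.mul ((continuous_const.mul hε'cont).sub hεcont))
      (fun x => mul_nonneg (hXpos x).le (by linarith [hle x])) hint2 hz
    refine hconst fun x => ?_
    rcases mul_eq_zero.1 (hall x) with h | h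
    · exact absurd h (hXpos x).ne'
    · linarith
  have existsb : ∃ b, 0 < b ∧ fε b / fε' b < k := by
    by_contra hcon
    push_neg at hcon
    have hpos' : ∀ x, 0 < x → k * fε' x ≤ fε x := fun x hx =>
      (le_div_iff₀ (hε'pos x)).1 (hcon x hx)
    have hle : ∀ x, k * fε' x ≤ fε x := by
      intro x
      rcases lt_trichotomy x 0 with hx | hx | hx
      · have h := hpos' (-x) (by linarith)
        rwa [hεeven x, hε'even x] at h
      · subst hx
        have htend : Filter.Tendsto (fun y => fε y - k * fε' y) (nhdsWithin 0 (Ioi 0))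
            (nhds (fε 0 - k * fε' 0)) :=
          (hεcont.sub (continuous_const.mul hε'cont)).continuousWithinAt
        have hev : ∀ᶠ y in nhdsWithin 0 (Ioi 0), (0:ℝ) ≤ fε y - k * fε' y := by
          filter_upwards [self_mem_nhdsWithin] with y hy
          have := hpos' y hy
          linarith
        have := ge_of_tendsto htend hev
        linarith
      · exact hpos' x hx
    have hint2 : Integrable (fun x => fX x * (fε x - k * fε' x)) := by
      have heq : (fun x => fX x * (fε x - k * fε' x)) =
          fun x => fX x * fε x - k * (fX x * fε' x) := by funext x; ring
      rw [heq]
      exact hIqint.sub (hIpint.const_mul k)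
    have hz : (∫ x, fX x * (fε x - k * fε' x)) = 0 := by
      have heq : (fun x => fX x * (fε x - k * fε' x)) =
          fun x => fX x * fε x - k * (fX x * fε' x) := by funext x; ring
      rw [heq, integral_sub hIqint (hIpint.const_mul k), integral_const_mul,
        ← hIpd, ← hIqd, hkIp, sub_self]
    have hall := hzero (fun x => fX x * (fε x - k * fε' x)) (hXcont.mul (hεcont.sub (continuous_const.mul hε'cont)))
      (fun x => mul_nonneg (hXpos x).le (by linarith [hle x])) hint2 hz
    refine hconst fun x => ?_
    rcases mul_eq_zero.1 (hall x) with h | h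
    · exact absurd h (hXpos x).ne'
    · linarith
  obtain ⟨a, ha, hra⟩ := existsa
  obtain ⟨b, hb, hrb⟩ := existsb
  have hab : a < b := by
    rcases lt_trichotomy a b with h | h | h
    · exact h
    · subst h; linarith
    · have := hratio (mem_Ioi.2 hb) (mem_Ioi.2 ha) h
      simp only at this
      linarith
  have hcontr : ContinuousOn (fun x => fε x / fε' x) (Icc a b) :=
    hεcont.continuousOn.div hε'cont.continuousOn (fun x _ => (hε'pos x).ne')
  obtain ⟨c, hcmem, hrc⟩ := intermediate_value_Icc' hab.le hcontr ⟨hrb.le, hra.le⟩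
  simp only at hrc
  have hcpos : 0 < c := lt_of_lt_of_le ha hcmem.1
  refine ⟨c, hcpos, ?_, ?_⟩
  · rintro x ⟨hx0, hxc⟩
    have h1 : |(-x) - μ| < |x - μ| := by
      rw [abs_of_pos (show (0:ℝ) < x - μ by linarith), abs_lt]
      constructor <;> linarith
    have hA : fX x < fX (-x) := symm_sc_lt hXpos hfXsym hfXsc h1
    have hr : k < fε x / fε' x := by
      have h2 := hratio (mem_Ioi.2 hx0) (mem_Ioi.2 hcpos) hxc
      simp only at h2
      rw [hrc] at h2
      exact h2
    have hkey : fε' x / Ip < fε x / Iq := by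
      rw [div_lt_div_iff₀ hIp hIq]
      rw [hkd] at hr
      have h3 := (div_lt_div_iff₀ hIp (hε'pos x)).1 hr
      rw [mul_comm (fε' x) Iq]
      linarith [h3]
    simp only [postDensity0, hεeven x, hε'even x, ← hIqd, ← hIpd]
    have heq : fX (-x) * fε x / Iq - fX x * fε x / Iq -
        (fX (-x) * fε' x / Ip - fX x * fε' x / Ip) =
        (fX (-x) - fX x) * (fε x / Iq - fε' x / Ip) := by ring
    rw [heq]
    exact mul_pos (by linarith) (by linarith)
  · intro x hcx
    have hx0 : 0 < x := lt_trans hcpos hcx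
    have h1 : |(-x) - μ| < |x - μ| := by
      rw [abs_of_pos (show (0:ℝ) < x - μ by linarith), abs_lt]
      constructor <;> linarith
    have hA : fX x < fX (-x) := symm_sc_lt hXpos hfXsym hfXsc h1
    have hr : fε x / fε' x < k := by
      have h2 := hratio (mem_Ioi.2 hcpos) (mem_Ioi.2 hx0) hcx
      simp only at h2
      rw [hrc] at h2
      exact h2
    have hkey : fε x / Iq < fε' x / Ip := by
      rw [div_lt_div_iff₀ hIq hIp]
      rw [hkd] at hr
      have h3 := (div_lt_div_iff₀ (hε'pos x) hIp).1 hr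
      rw [mul_comm (fε x) Ip]
      linarith [h3]
    simp only [postDensity0, hεeven x, hε'even x, ← hIqd, ← hIpd]
    have heq : fX (-x) * fε x / Iq - fX x * fε x / Iq -
        (fX (-x) * fε' x / Ip - fX x * fε' x / Ip) =
        (fX (-x) - fX x) * (fε x / Iq - fε' x / Ip) := by ring
    rw [heq]
    exact mul_neg_of_pos_of_neg (by linarith) (by linarith)
end
end

section
/- Monotone posterior reflection ratio (Lemma 3). Let f_X be a density symmetric about its mean μ < 0 with log f_X strictly concave, and let f_ε̃ be a density symmetric about 0. Define the posterior density at signal realization 0 by p(x) := f_X(x)·f_ε̃(x) / ∫ f_X(u)·f_ε̃(u) du. Then the map x ↦ p(−x)/p(x) is strictly increasing on ℝ. -/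
open MeasureTheory Real Set

noncomputable section

/-- Auxiliary: for a strictly concave function, shifting left by a negative amount
gives a strictly increasing difference. -/
lemma shift_strictMono (g : ℝ → ℝ) (hg : StrictConcaveOn ℝ Set.univ g) {c : ℝ} (hc : c < 0) :
    StrictMono fun x => g (x + c) - g x := by
  intro x y hxy
  have hd0 : 0 < y - x := by linarith
  have hdc : 0 < y - x - c := by linarith
  set l : ℝ := (y - x) / (y - x - c) with hl
  have hl0 : 0 < l := div_pos hd0 hdc
  have hl1 : l < 1 := (div_lt_one hdc).mpr (by linarith)
  have hab : x + c ≠ y := by intro h; linarith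
  have h1 := hg.2 (mem_univ (x + c)) (mem_univ y) hab hl0 (by linarith : (0:ℝ) < 1 - l) (by ring)
  have h2 := hg.2 (mem_univ (x + c)) (mem_univ y) hab (by linarith : (0:ℝ) < 1 - l) hl0 (by ring)
  simp only [smul_eq_mul] at h1 h2
  have hpt1 : l * (x + c) + (1 - l) * y = x := by rw [hl]; field_simp; ring
  have hpt2 : (1 - l) * (x + c) + l * y = y + c := by rw [hl]; field_simp; ring
  rw [hpt1] at h1
  rw [hpt2] at h2
  simp only
  linarith

lemma tail_right (g : ℝ → ℝ) (hg : ConcaveOn ℝ Set.univ g)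
    (hint : Integrable (fun x => Real.exp (g x))) : ∃ R : ℝ, ∀ x ≥ R, g x ≤ g 0 := by
  by_contra h
  push_neg at h
  have key : ∀ y ≥ (0:ℝ), g 0 ≤ g y := by
    intro y hy
    obtain ⟨x, hxy, hgx⟩ := h y
    rcases eq_or_lt_of_le hxy with rfl | hlt
    · exact hgx.le
    · have hx0 : 0 < x := lt_of_le_of_lt hy hlt
      have hb0 : 0 ≤ y / x := div_nonneg hy hx0.le
      have hb1 : y / x ≤ 1 := (div_le_one hx0).mpr hlt.le
      have := hg.2 (mem_univ (0:ℝ)) (mem_univ x) (by linarith : (0:ℝ) ≤ 1 - y/x) hb0 (by ring)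
      simp only [smul_eq_mul, mul_zero, zero_add] at this
      rw [div_mul_cancel₀ _ hx0.ne'] at this
      nlinarith [this]
  have hconst : Integrable (fun _ : ℝ => Real.exp (g 0)) (volume.restrict (Set.Ici (0:ℝ))) := by
    refine Integrable.mono' hint.restrict aestronglyMeasurable_const ?_
    filter_upwards [ae_restrict_mem measurableSet_Ici] with x hx
    rw [Real.norm_eq_abs, abs_of_pos (Real.exp_pos _)]
    exact Real.exp_le_exp.mpr (key x hx)
  rw [integrable_const_iff] at hconst
  rcases hconst with h1 | h2
  · exact (Real.exp_pos _).ne' h1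
  · replace h2 := h2.measure_univ_lt_top
    rw [Measure.restrict_apply_univ, Real.volume_Ici] at h2
    exact (lt_irrefl _ h2)

lemma concave_exp_bdd (g : ℝ → ℝ) (hg : ConcaveOn ℝ Set.univ g) (hcont : Continuous g)
    (hint : Integrable (fun x => Real.exp (g x))) : ∃ M : ℝ, ∀ x, g x ≤ M := by
  obtain ⟨R1, hR1⟩ := tail_right g hg hint
  have hgneg : ConcaveOn ℝ Set.univ (fun x => g (-x)) := by
    refine ⟨convex_univ, fun x _ y _ a b ha hb hab => ?_⟩
    have := hg.2 (mem_univ (-x)) (mem_univ (-y)) ha hb hab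
    simpa [smul_neg, neg_add, add_comm] using this
  have hintneg : Integrable (fun x => Real.exp (g (-x))) := hint.comp_neg
  obtain ⟨R2, hR2⟩ := tail_right _ hgneg hintneg
  simp only [neg_zero] at hR2
  set a : ℝ := -(max R2 0) with ha
  set b : ℝ := max R1 0 with hb
  obtain ⟨C, hC⟩ := (isCompact_Icc (a := a) (b := b)).exists_bound_of_continuousOn hcont.continuousOn
  refine ⟨max C (g 0), fun x => ?_⟩
  rcases le_or_gt x b with hxb | hxb
  · rcases le_or_gt a x with hax | hax
    · exact le_trans (le_of_abs_le (by simpa [Real.norm_eq_abs] using hC x ⟨hax, hxb⟩)) (le_max_left _ _)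
    · have : -x ≥ R2 := by
        have : -x > max R2 0 := by rw [ha] at hax; linarith
        exact le_of_lt (lt_of_le_of_lt (le_max_left _ _) this)
      have h2 := hR2 (-x) this
      rw [neg_neg] at h2
      exact le_trans h2 (le_max_right _ _)
  · have : x ≥ R1 := le_of_lt (lt_of_le_of_lt (le_max_left R1 0) hxb)
    exact le_trans (hR1 x this) (le_max_right _ _)


/-- Lemma 3: the posterior reflection ratio is strictly increasing. -/
theorem posterior_reflection_ratio_strictMono
    (fX fε' : ℝ → ℝ) (μ : ℝ) (hμneg : μ < 0)
    (hfX : IsDensity fX) (hfXsym : SymmAbout μ fX) (hμ : μ = ∫ x, x * fX x)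
    (hfXsc : StrictConcaveOn ℝ Set.univ fun x => Real.log (fX x))
    (hfε' : IsDensity fε') (hfε'sym : SymmAbout 0 fε') :
    StrictMono (fun x => postDensity0 fX fε' (-x) / postDensity0 fX fε' x) := by

  obtain ⟨hfXpos, hfXcd, hfXint1, -⟩ := hfX
  obtain ⟨hfεpos, hfεcd, hfεint1, -⟩ := hfε'
  have hfXsym' : ∀ x, fX (μ + x) = fX (μ - x) := hfXsym
  have hfε'sym' : ∀ x, fε' (0 + x) = fε' (0 - x) := hfε'sym
  simp only [postDensity0]

  set g : ℝ → ℝ := fun x => Real.log (fX x) with hgdef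
  have hfXexp : ∀ x, fX x = Real.exp (g x) := fun x => (Real.exp_log (hfXpos x)).symm
  have hfXI : Integrable fX := by
    by_contra h
    rw [integral_undef h] at hfXint1
    norm_num at hfXint1
  have hfεI : Integrable fε' := by
    by_contra h
    rw [integral_undef h] at hfεint1
    norm_num at hfεint1
  have hgcont : Continuous g := (hfXcd.continuous).log (fun x => (hfXpos x).ne')
  have hintexp : Integrable (fun x => Real.exp (g x)) := by
    have : (fun x => Real.exp (g x)) = fX := by funext x; rw [← hfXexp]
    rw [this]; exact hfXI
  obtain ⟨M, hM⟩ := concave_exp_bdd g hfXsc.concaveOn hgcont hintexp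
  have hfXbdd : ∀ x, ‖fX x‖ ≤ Real.exp M := by
    intro x
    rw [Real.norm_eq_abs, abs_of_pos (hfXpos x), hfXexp x]
    exact Real.exp_le_exp.mpr (hM x)
  have hprodI : Integrable (fun u => fX u * fε' u) :=
    hfεI.bdd_mul (hfXcd.continuous.aestronglyMeasurable) (c := Real.exp M) (Filter.Eventually.of_forall hfXbdd)
  have hCpos : 0 < ∫ u, fX u * fε' u := by
    rw [integral_pos_iff_support_of_nonneg
      (fun u => le_of_lt (mul_pos (hfXpos u) (hfεpos u))) hprodI]
    have : Function.support (fun u => fX u * fε' u) = Set.univ := by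
      ext u
      simp only [Function.mem_support, Set.mem_univ, iff_true]
      exact mul_ne_zero (hfXpos u).ne' (hfεpos u).ne'
    rw [this]
    simp
  have hεeven : ∀ x, fε' (-x) = fε' x := by
    intro x; have := hfε'sym' x; simpa using this.symm
  have hXrefl : ∀ x, fX (-x) = fX (x + 2*μ) := by
    intro x
    have := hfXsym' (-x - μ)
    have e1 : μ + (-x - μ) = -x := by ring
    have e2 : μ - (-x - μ) = x + 2*μ := by ring
    rw [e1, e2] at this; exact this
  have key : ∀ x, (fX (-x) * fε' (-x) / ∫ u, fX u * fε' u) /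
      (fX x * fε' x / ∫ u, fX u * fε' u) =
      Real.exp (g (x + 2*μ) - g x) := by
    intro x
    rw [hεeven x, hXrefl x, Real.exp_sub, ← hfXexp, ← hfXexp]
    have hC := hCpos.ne'
    have h1 := Real.exp_ne_zero (g x)
    have h2 := (hfεpos x).ne'
    field_simp
  have hmono : StrictMono fun x => g (x + 2*μ) - g x :=
    shift_strictMono g hfXsc (by linarith : 2*μ < 0)
  intro x y hxy
  show (fX (-x) * fε' (-x) / ∫ u, fX u * fε' u) / (fX x * fε' x / ∫ u, fX u * fε' u) <
    (fX (-y) * fε' (-y) / ∫ u, fX u * fε' u) / (fX y * fε' y / ∫ u, fX u * fε' u)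
  rw [key x, key y]
  exact Real.exp_lt_exp.mpr (hmono hxy)
end
end

section
/- Tail-mass ratio inequality (Lemma 4). Let p : ℝ → (0,∞) be integrable with ∫ p = 1, and suppose x ↦ p(−x)/p(x) is nondecreasing on (0,∞). Define F₁ := ∫_1^∞ p(−x) dx, F₂ := ∫_0^1 p(−x) dx, F₃ := ∫_0^1 p(x) dx, F₄ := ∫_1^∞ p(x) dx. Then F₁/F₄ ≥ F₂/F₃ (equivalently F₁·F₃ ≥ F₂·F₄). -/
open MeasureTheory Real Set

/-- Lemma 4: tail-mass ratio inequality. -/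
theorem tail_mass_ratio_inequality
    (p : ℝ → ℝ) (hpos : ∀ x, 0 < p x)
    (hint : MeasureTheory.Integrable p) (hone : (∫ x, p x) = 1)
    (hmono : MonotoneOn (fun x => p (-x) / p x) (Set.Ioi 0)) :
    (∫ x in Set.Ioo (0:ℝ) 1, p (-x)) / (∫ x in Set.Ioo (0:ℝ) 1, p x) ≤
      (∫ x in Set.Ioi (1:ℝ), p (-x)) / (∫ x in Set.Ioi (1:ℝ), p x) := by
  have hintn : Integrable (fun x => p (-x)) := hint.comp_neg
  set c : ℝ := p (-1) / p 1 with hc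
  have h1 : (1:ℝ) ∈ Set.Ioi (0:ℝ) := by norm_num
  -- positivity of the two denominators
  have hF3 : 0 < ∫ x in Set.Ioo (0:ℝ) 1, p x := by
    apply setIntegral_pos_iff_support_of_nonneg_ae ?_ (hint.integrableOn) |>.mpr
    · have : Function.support p = Set.univ := by
        ext x; simp [Function.support, (hpos x).ne']
      rw [this]
      simp [Real.volume_Ioo]
    · filter_upwards with x using (hpos x).le
  have hF4 : 0 < ∫ x in Set.Ioi (1:ℝ), p x := by
    apply setIntegral_pos_iff_support_of_nonneg_ae ?_ (hint.integrableOn) |>.mpr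
    · have : Function.support p = Set.univ := by
        ext x; simp [Function.support, (hpos x).ne']
      rw [this]
      simp
    · filter_upwards with x using (hpos x).le
  -- F₂ ≤ c * F₃
  have hA : (∫ x in Set.Ioo (0:ℝ) 1, p (-x)) ≤ c * ∫ x in Set.Ioo (0:ℝ) 1, p x := by
    rw [← integral_const_mul]
    apply setIntegral_mono_on hintn.integrableOn (hint.integrableOn.const_mul c)
      measurableSet_Ioo
    intro x hx
    have hr : p (-x) / p x ≤ c := hmono hx.1 h1 hx.2.le
    calc p (-x) = (p (-x) / p x) * p x := by
          rw [div_mul_cancel₀ _ (hpos x).ne']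
      _ ≤ c * p x := mul_le_mul_of_nonneg_right hr (hpos x).le
  -- c * F₄ ≤ F₁
  have hB : c * (∫ x in Set.Ioi (1:ℝ), p x) ≤ ∫ x in Set.Ioi (1:ℝ), p (-x) := by
    rw [← integral_const_mul]
    apply setIntegral_mono_on (hint.integrableOn.const_mul c) hintn.integrableOn
      measurableSet_Ioi
    intro x hx
    have hr : c ≤ p (-x) / p x := hmono h1 (Set.mem_Ioi.mpr (lt_trans one_pos hx)) (le_of_lt hx)
    calc c * p x ≤ (p (-x) / p x) * p x := mul_le_mul_of_nonneg_right hr (hpos x).le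
      _ = p (-x) := div_mul_cancel₀ _ (hpos x).ne'
  calc (∫ x in Set.Ioo (0:ℝ) 1, p (-x)) / (∫ x in Set.Ioo (0:ℝ) 1, p x)
      ≤ c := (div_le_iff₀ hF3).mpr hA
    _ ≤ (∫ x in Set.Ioi (1:ℝ), p (-x)) / (∫ x in Set.Ioi (1:ℝ), p x) :=
        (le_div_iff₀ hF4).mpr hB
end

section
/- Ordering of reweighted masses (Lemma 5). Let p : ℝ → (0,∞) be a density with x ↦ p(−x)/p(x) strictly increasing on (0,∞). Let r : ℝ → (0,∞) be even (r(−x) = r(x) for all x) and strictly decreasing on (0,∞), and let C > 0 satisfy C·r(1) = 1, so that C·r(x) > 1 for x ∈ [0,1) and C·r(x) < 1 for x > 1. Suppose q(x) := C·r(x)·p(x) integrates to 1. Define F₁ := ∫_1^∞ p(−x) dx, F₂ := ∫_0^1 p(−x) dx, F₃ := ∫_0^1 p(x) dx, F₄ := ∫_1^∞ p(x) dx, and G₁, G₂, G₃, G₄ analogously with q in place of p. Then 1 < G₂/F₂ < G₃/F₃ and G₁/F₁ < G₄/F₄ < 1. -/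
open MeasureTheory Real Set

lemma diag_null_aux : (volume.prod volume : Measure (ℝ × ℝ)) {z : ℝ × ℝ | z.1 = z.2} = 0 := by
  have hmeas : MeasurableSet {z : ℝ × ℝ | z.1 = z.2} :=
    (isClosed_eq continuous_fst continuous_snd).measurableSet
  rw [Measure.prod_apply hmeas]
  have : ∀ x : ℝ, (volume : Measure ℝ) (Prod.mk x ⁻¹' {z : ℝ × ℝ | z.1 = z.2}) = 0 := by
    intro x
    have : Prod.mk x ⁻¹' {z : ℝ × ℝ | z.1 = z.2} = {x} := by
      ext y; simp [eq_comm]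
    rw [this]
    exact measure_singleton x
  simp [this]

lemma setIntegral_pos_aux {S : Set ℝ} (hS : MeasurableSet S) (hSpos : 0 < volume S)
    {f : ℝ → ℝ} (hf : IntegrableOn f S) (hpos : ∀ x ∈ S, 0 < f x) :
    0 < ∫ x in S, f x := by
  have hnn : 0 ≤ᵐ[volume.restrict S] f := by
    filter_upwards [ae_restrict_mem hS] with x hx
    exact (hpos x hx).le
  rw [integral_pos_iff_support_of_nonneg_ae hnn hf]
  refine lt_of_lt_of_le ?_ (measure_mono (fun x hx => (hpos x hx).ne' : S ⊆ Function.support f))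
  rwa [Measure.restrict_apply hS, Set.inter_self]

lemma chebyshev_strict_aux {S : Set ℝ} (hS : MeasurableSet S) (hSpos : 0 < volume S)
    {a b wa wb : ℝ → ℝ}
    (ha : IntegrableOn a S) (hb : IntegrableOn b S)
    (hwa : IntegrableOn wa S) (hwb : IntegrableOn wb S)
    (hle : ∀ x ∈ S, ∀ y ∈ S, wb x * a y + a x * wb y ≤ wa x * b y + b x * wa y)
    (hlt : ∀ x ∈ S, ∀ y ∈ S, x ≠ y → wb x * a y + a x * wb y < wa x * b y + b x * wa y) :
    (∫ x in S, wb x) * (∫ x in S, a x) < (∫ x in S, wa x) * (∫ x in S, b x) := by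
  set μ : Measure ℝ := volume.restrict S with hμ
  set H : ℝ × ℝ → ℝ := fun z =>
    (wa z.1 * b z.2 + b z.1 * wa z.2) - (wb z.1 * a z.2 + a z.1 * wb z.2) with hH
  have hprodeq : μ.prod μ = (volume.prod volume).restrict (S ×ˢ S) :=
    Measure.prod_restrict S S
  have hA : Integrable (fun z : ℝ × ℝ => wa z.1 * b z.2 + b z.1 * wa z.2) (μ.prod μ) :=
    (hwa.mul_prod hb).add (hb.mul_prod hwa)
  have hB : Integrable (fun z : ℝ × ℝ => wb z.1 * a z.2 + a z.1 * wb z.2) (μ.prod μ) :=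
    (hwb.mul_prod ha).add (ha.mul_prod hwb)
  have hint : Integrable H (μ.prod μ) := hA.sub hB
  have haemem : ∀ᵐ z ∂(μ.prod μ), z ∈ S ×ˢ S := by
    rw [hprodeq]
    exact ae_restrict_mem (hS.prod hS)
  have hnn : 0 ≤ᵐ[μ.prod μ] H := by
    filter_upwards [haemem] with z hz
    have := hle z.1 hz.1 z.2 hz.2
    simp only [Pi.zero_apply, hH]
    linarith
  have hIpos : 0 < ∫ z, H z ∂(μ.prod μ) := by
    rw [integral_pos_iff_support_of_nonneg_ae hnn hint]
    have hdiagmeas : MeasurableSet {z : ℝ × ℝ | z.1 = z.2} :=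
      (isClosed_eq continuous_fst continuous_snd).measurableSet
    have hdiagnull : (μ.prod μ) {z : ℝ × ℝ | z.1 = z.2} = 0 := by
      rw [hprodeq, Measure.restrict_apply hdiagmeas]
      exact measure_mono_null Set.inter_subset_left diag_null_aux
    have hsub : (S ×ˢ S) \ {z : ℝ × ℝ | z.1 = z.2} ⊆ Function.support H := by
      rintro z ⟨hz, hne⟩
      have := hlt z.1 hz.1 z.2 hz.2 hne
      simp only [Function.mem_support, hH]
      intro h0
      linarith
    have hSS : (μ.prod μ) (S ×ˢ S \ {z : ℝ × ℝ | z.1 = z.2}) = volume S * volume S := by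
      rw [measure_diff_null hdiagnull, Measure.prod_prod, hμ, Measure.restrict_apply hS,
        Set.inter_self]
    calc (0:ENNReal) < volume S * volume S := ENNReal.mul_pos hSpos.ne' hSpos.ne'
      _ = (μ.prod μ) (S ×ˢ S \ {z : ℝ × ℝ | z.1 = z.2}) := hSS.symm
      _ ≤ (μ.prod μ) (Function.support H) := measure_mono hsub
  have hcalc : ∫ z, H z ∂(μ.prod μ) =
      ((∫ x in S, wa x) * (∫ x in S, b x) + (∫ x in S, b x) * (∫ x in S, wa x)) -
      ((∫ x in S, wb x) * (∫ x in S, a x) + (∫ x in S, a x) * (∫ x in S, wb x)) := by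
    rw [hH]
    rw [integral_sub hA hB,
      integral_add (hwa.mul_prod hb) (hb.mul_prod hwa),
      integral_add (hwb.mul_prod ha) (ha.mul_prod hwb),
      integral_prod_mul, integral_prod_mul, integral_prod_mul, integral_prod_mul]
  rw [hcalc] at hIpos
  linarith

/-- Lemma 5: ordering of reweighted masses. -/
theorem reweighted_mass_ordering
    (p r : ℝ → ℝ) (C : ℝ)
    (hppos : ∀ x, 0 < p x) (hpint : MeasureTheory.Integrable p) (hpone : (∫ x, p x) = 1)
    (hpratio : StrictMonoOn (fun x => p (-x) / p x) (Set.Ioi 0))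
    (hrpos : ∀ x, 0 < r x) (hreven : ∀ x, r (-x) = r x)
    (hranti : StrictAntiOn r (Set.Ioi 0))
    (hC : 0 < C) (hC1 : C * r 1 = 1)
    (hrgt : ∀ x, 0 ≤ x → x < 1 → 1 < C * r x)
    (hrlt : ∀ x, 1 < x → C * r x < 1)
    (hqone : (∫ x, C * r x * p x) = 1) :
    (1 < (∫ x in Set.Ioo (0:ℝ) 1, C * r (-x) * p (-x)) / (∫ x in Set.Ioo (0:ℝ) 1, p (-x)) ∧
      (∫ x in Set.Ioo (0:ℝ) 1, C * r (-x) * p (-x)) / (∫ x in Set.Ioo (0:ℝ) 1, p (-x)) <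
        (∫ x in Set.Ioo (0:ℝ) 1, C * r x * p x) / (∫ x in Set.Ioo (0:ℝ) 1, p x)) ∧
    ((∫ x in Set.Ioi (1:ℝ), C * r (-x) * p (-x)) / (∫ x in Set.Ioi (1:ℝ), p (-x)) <
        (∫ x in Set.Ioi (1:ℝ), C * r x * p x) / (∫ x in Set.Ioi (1:ℝ), p x) ∧
      (∫ x in Set.Ioi (1:ℝ), C * r x * p x) / (∫ x in Set.Ioi (1:ℝ), p x) < 1) := by
  -- notation
  set q : ℝ → ℝ := fun x => C * r x * p x with hq
  -- q is integrable
  have hqint : Integrable q := by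
    by_contra h
    rw [integral_undef h] at hqone
    norm_num at hqone
  -- negated versions
  have hemb := (MeasurableEquiv.neg ℝ).measurableEmbedding
  have hmp := Measure.measurePreserving_neg (volume : Measure ℝ)
  have hbint : Integrable (fun x => p (-x)) :=
    (hmp.integrable_comp_emb hemb).mpr hpint
  have hwbint : Integrable (fun x => C * r x * p (-x)) := by
    have h1 : Integrable (fun x => q (-x)) := (hmp.integrable_comp_emb hemb).mpr hqint
    refine h1.congr (ae_of_all _ fun x => ?_)
    simp [hq, hreven]
  -- pointwise hypotheses for the Chebyshev lemma on a subset of (0,∞)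
  have key : ∀ x ∈ Set.Ioi (0:ℝ), ∀ y ∈ Set.Ioi (0:ℝ), x ≠ y →
      C * r x * p (-x) * p y + p x * (C * r y * p (-y)) <
        C * r x * p x * (p (-y)) + p (-x) * (C * r y * p y) := by
    intro x hx y hy hne
    -- wlog x < y via symmetry of the statement
    rcases hne.lt_or_gt with hxy | hxy
    · have hw : C * r y < C * r x := by
        have := hranti hx hy hxy
        exact (mul_lt_mul_iff_right₀ hC).mpr this
      have hr : p (-x) / p x < p (-y) / p y := hpratio hx hy hxy
      have hr' : p (-x) * p y < p (-y) * p x :=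
        (div_lt_div_iff₀ (hppos x) (hppos y)).mp hr
      nlinarith [mul_pos (sub_pos.mpr hw) (sub_pos.mpr (show p (-x) * p y < p (-y) * p x from hr'))]
    · have hw : C * r x < C * r y := by
        have := hranti hy hx hxy
        exact (mul_lt_mul_iff_right₀ hC).mpr this
      have hr : p (-y) / p y < p (-x) / p x := hpratio hy hx hxy
      have hr' : p (-y) * p x < p (-x) * p y :=
        (div_lt_div_iff₀ (hppos y) (hppos x)).mp hr
      nlinarith [mul_pos (sub_pos.mpr hw) (sub_pos.mpr hr')]
  have keyle : ∀ x ∈ Set.Ioi (0:ℝ), ∀ y ∈ Set.Ioi (0:ℝ),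
      C * r x * p (-x) * p y + p x * (C * r y * p (-y)) ≤
        C * r x * p x * (p (-y)) + p (-x) * (C * r y * p y) := by
    intro x hx y hy
    rcases eq_or_ne x y with rfl | hne
    · ring_nf; exact le_of_eq (by ring)
    · exact (key x hx y hy hne).le
  -- the two sets
  have hS1 : MeasurableSet (Set.Ioo (0:ℝ) 1) := measurableSet_Ioo
  have hS2 : MeasurableSet (Set.Ioi (1:ℝ)) := measurableSet_Ioi
  have hS1pos : 0 < volume (Set.Ioo (0:ℝ) 1) := by simp [Real.volume_Ioo]
  have hS2pos : 0 < volume (Set.Ioi (1:ℝ)) := by simp [Real.volume_Ioi]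
  have hS1sub : Set.Ioo (0:ℝ) 1 ⊆ Set.Ioi 0 := fun x hx => hx.1
  have hS2sub : Set.Ioi (1:ℝ) ⊆ Set.Ioi 0 := fun x hx => (lt_trans one_pos hx : (0:ℝ) < x)
  -- positivity of the four denominators / numerators
  have hF2 : 0 < ∫ x in Set.Ioo (0:ℝ) 1, p (-x) :=
    setIntegral_pos_aux hS1 hS1pos hbint.integrableOn (fun x _ => hppos (-x))
  have hF3 : 0 < ∫ x in Set.Ioo (0:ℝ) 1, p x :=
    setIntegral_pos_aux hS1 hS1pos hpint.integrableOn (fun x _ => hppos x)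
  have hF1 : 0 < ∫ x in Set.Ioi (1:ℝ), p (-x) :=
    setIntegral_pos_aux hS2 hS2pos hbint.integrableOn (fun x _ => hppos (-x))
  have hF4 : 0 < ∫ x in Set.Ioi (1:ℝ), p x :=
    setIntegral_pos_aux hS2 hS2pos hpint.integrableOn (fun x _ => hppos x)
  -- rewrite the even weights
  have hre : ∀ x : ℝ, C * r (-x) * p (-x) = C * r x * p (-x) := by
    intro x; rw [hreven]
  simp only [hre]
  -- Part 1 : 1 < G₂ / F₂
  have hG2gt : (∫ x in Set.Ioo (0:ℝ) 1, p (-x)) < ∫ x in Set.Ioo (0:ℝ) 1, C * r x * p (-x) := by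
    have hdiff : 0 < ∫ x in Set.Ioo (0:ℝ) 1, (C * r x * p (-x) - p (-x)) := by
      refine setIntegral_pos_aux hS1 hS1pos (hwbint.integrableOn.sub hbint.integrableOn) ?_
      intro x hx
      have h1 : 1 < C * r x := hrgt x hx.1.le hx.2
      nlinarith [hppos (-x)]
    rw [integral_sub hwbint.integrableOn hbint.integrableOn] at hdiff
    linarith
  -- Part 4 : G₄ < F₄
  have hG4lt : (∫ x in Set.Ioi (1:ℝ), C * r x * p x) < ∫ x in Set.Ioi (1:ℝ), p x := by
    have hdiff : 0 < ∫ x in Set.Ioi (1:ℝ), (p x - C * r x * p x) := by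
      refine setIntegral_pos_aux hS2 hS2pos (hpint.integrableOn.sub hqint.integrableOn) ?_
      intro x hx
      have h1 : C * r x < 1 := hrlt x hx
      nlinarith [hppos x]
    rw [integral_sub hpint.integrableOn hqint.integrableOn] at hdiff
    linarith
  -- Chebyshev on each set
  have hcheb1 := chebyshev_strict_aux hS1 hS1pos
      (a := p) (b := fun x => p (-x)) (wa := fun x => C * r x * p x) (wb := fun x => C * r x * p (-x))
      hpint.integrableOn hbint.integrableOn hqint.integrableOn hwbint.integrableOn
      (fun x hx y hy => keyle x (hS1sub hx) y (hS1sub hy))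
      (fun x hx y hy hne => key x (hS1sub hx) y (hS1sub hy) hne)
  have hcheb2 := chebyshev_strict_aux hS2 hS2pos
      (a := p) (b := fun x => p (-x)) (wa := fun x => C * r x * p x) (wb := fun x => C * r x * p (-x))
      hpint.integrableOn hbint.integrableOn hqint.integrableOn hwbint.integrableOn
      (fun x hx y hy => keyle x (hS2sub hx) y (hS2sub hy))
      (fun x hx y hy hne => key x (hS2sub hx) y (hS2sub hy) hne)
  -- positivity of numerators
  have hG2 : 0 < ∫ x in Set.Ioo (0:ℝ) 1, C * r x * p (-x) := lt_trans hF2 hG2gt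
  have hG1 : 0 < ∫ x in Set.Ioi (1:ℝ), C * r x * p (-x) :=
    setIntegral_pos_aux hS2 hS2pos hwbint.integrableOn
      (fun x _ => mul_pos (mul_pos hC (hrpos x)) (hppos (-x)))
  refine ⟨⟨?_, ?_⟩, ?_, ?_⟩
  · rw [lt_div_iff₀ hF2, one_mul]; exact hG2gt
  · rw [div_lt_div_iff₀ hF2 hF3]; exact hcheb1
  · rw [div_lt_div_iff₀ hF1 hF4]; exact hcheb2
  · rw [div_lt_one hF4]; exact hG4lt
end

section
/- Algebraic rebalancing inequality (Lemma 6). Let F₁, F₂, F₃, F₄ > 0 satisfy F₁ + F₂ + F₃ + F₄ = 1 and F₁/F₄ > F₂/F₃. Let k > 1 and define l ∈ ℝ by l·(F₁ + F₄) = (F₁ + F₄) − (k − 1)·(F₂ + F₃). Then −k·F₂ + k·F₃ − l·F₁ + l·F₄ > −F₂ + F₃ − F₁ + F₄. -/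
/-- Lemma 6: algebraic rebalancing inequality. -/
theorem algebraic_rebalancing
    (F₁ F₂ F₃ F₄ k l : ℝ)
    (h₁ : 0 < F₁) (h₂ : 0 < F₂) (h₃ : 0 < F₃) (h₄ : 0 < F₄)
    (hsum : F₁ + F₂ + F₃ + F₄ = 1)
    (hratio : F₂ / F₃ < F₁ / F₄)
    (hk : 1 < k)
    (hl : l * (F₁ + F₄) = (F₁ + F₄) - (k - 1) * (F₂ + F₃)) :
    -F₂ + F₃ - F₁ + F₄ < -(k * F₂) + k * F₃ - l * F₁ + l * F₄ := by
  have hcross : F₂ * F₄ < F₁ * F₃ := by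
    rw [div_lt_div_iff₀ h₃ h₄] at hratio; linarith
  have h14 : 0 < F₁ + F₄ := by linarith
  -- (1-l)(F₁+F₄) = (k-1)(F₂+F₃)
  have hu : (1 - l) * (F₁ + F₄) = (k - 1) * (F₂ + F₃) := by ring_nf; linarith [hl]
  have hkey : ((k - 1) * (F₃ - F₂) + (1 - l) * (F₁ - F₄)) * (F₁ + F₄) > 0 := by
    have : ((k - 1) * (F₃ - F₂) + (1 - l) * (F₁ - F₄)) * (F₁ + F₄)
        = (k - 1) * ((F₃ - F₂) * (F₁ + F₄) + (F₂ + F₃) * (F₁ - F₄)) := by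
      have : (1 - l) * (F₁ - F₄) * (F₁ + F₄) = (k - 1) * (F₂ + F₃) * (F₁ - F₄) := by
        calc (1 - l) * (F₁ - F₄) * (F₁ + F₄) = (1 - l) * (F₁ + F₄) * (F₁ - F₄) := by ring
          _ = (k - 1) * (F₂ + F₃) * (F₁ - F₄) := by rw [hu]
      nlinarith [this]
    rw [this]
    have : (F₃ - F₂) * (F₁ + F₄) + (F₂ + F₃) * (F₁ - F₄) = 2 * (F₁ * F₃ - F₂ * F₄) := by ring
    nlinarith
  nlinarith [hkey, h14]
end

section
/- The Student-t family satisfies the scaling criterion. For every ν > 0, the function x ↦ −((ν + 1)/2)·log(1 + exp(2x)/ν) is concave on ℝ. Equivalently, for the Student-t density f(x) = c_ν·(1 + x²/ν)^{−(ν+1)/2} (c_ν > 0 a normalizing constant), the map x ↦ log f(exp x) is concave on ℝ, even though f itself is not log-concave. -/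
open Real

lemma logsum_convex (ν : ℝ) (hν : 0 < ν) :
    ConvexOn ℝ Set.univ (fun x : ℝ => Real.log (ν + Real.exp (2 * x))) := by
  have hpos : ∀ x : ℝ, 0 < ν + Real.exp (2 * x) := fun x => by positivity
  apply convexOn_of_hasDerivWithinAt2_nonneg (f' := fun x => 2 * Real.exp (2 * x) / (ν + Real.exp (2 * x)))
    (f'' := fun x => (2 * (2 * Real.exp (2 * x)) * (ν + Real.exp (2 * x)) -
      2 * Real.exp (2 * x) * (2 * Real.exp (2 * x))) / (ν + Real.exp (2 * x)) ^ 2)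
    convex_univ
  · have : Continuous (fun x : ℝ => ν + Real.exp (2 * x)) := by continuity
    exact (this.log (fun x => (hpos x).ne')).continuousOn
  · intro x _
    have hu : HasDerivAt (fun x : ℝ => ν + Real.exp (2 * x)) (2 * Real.exp (2 * x)) x := by
      have := (Real.hasDerivAt_exp (2 * x)).comp x ((hasDerivAt_id x).const_mul 2)
      simpa [mul_comm] using this.const_add ν
    exact (hu.log (hpos x).ne').hasDerivWithinAt
  · intro x _
    have hu : HasDerivAt (fun x : ℝ => ν + Real.exp (2 * x)) (2 * Real.exp (2 * x)) x := by
      have := (Real.hasDerivAt_exp (2 * x)).comp x ((hasDerivAt_id x).const_mul 2)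
      simpa [mul_comm] using this.const_add ν
    have hn : HasDerivAt (fun x : ℝ => 2 * Real.exp (2 * x)) (2 * (2 * Real.exp (2 * x))) x := by
      have := (Real.hasDerivAt_exp (2 * x)).comp x ((hasDerivAt_id x).const_mul 2)
      simpa [mul_comm, mul_assoc, mul_left_comm] using this.const_mul 2
    exact (hn.div hu (hpos x).ne').hasDerivWithinAt
  · intro x _
    apply div_nonneg _ (by positivity)
    nlinarith [Real.exp_pos (2 * x), hν.le]

/-- The Student-t family satisfies the scaling criterion: `x ↦ log f(exp x)` is
concave for the Student-t density with parameter `ν > 0`. -/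
theorem studentT_scaling_criterion (ν : ℝ) (hν : 0 < ν) :
    ConcaveOn ℝ Set.univ
      (fun x : ℝ => -((ν + 1) / 2) * Real.log (1 + Real.exp (2 * x) / ν)) ∧
    ∀ c : ℝ, 0 < c →
      ConcaveOn ℝ Set.univ
        (fun x : ℝ => Real.log (c * (1 + (Real.exp x) ^ 2 / ν) ^ (-((ν + 1) / 2)))) := by
  have hk : (0:ℝ) ≤ (ν + 1) / 2 := by linarith
  have hL : ConvexOn ℝ Set.univ (fun x : ℝ => Real.log (1 + Real.exp (2 * x) / ν)) := by
    have heq : (fun x : ℝ => Real.log (1 + Real.exp (2 * x) / ν)) =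
        (fun x : ℝ => Real.log (ν + Real.exp (2 * x)) + (- Real.log ν)) := by
      funext x
      have h1 : (1 : ℝ) + Real.exp (2 * x) / ν = (ν + Real.exp (2 * x)) / ν := by
        field_simp
      rw [h1, Real.log_div (by positivity) hν.ne']
      ring
    rw [heq]
    exact (logsum_convex ν hν).add_const _
  have h1 : ConcaveOn ℝ Set.univ
      (fun x : ℝ => -((ν + 1) / 2) * Real.log (1 + Real.exp (2 * x) / ν)) := by
    have := (hL.smul hk).neg
    convert this using 1
    iterate 3 rfl
    funext x
    simp only [Pi.neg_apply, Pi.smul_apply, smul_eq_mul]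
    ring
  refine ⟨h1, fun c hc => ?_⟩
  have heq : (fun x : ℝ => Real.log (c * (1 + (Real.exp x) ^ 2 / ν) ^ (-((ν + 1) / 2)))) =
      (fun x : ℝ => -((ν + 1) / 2) * Real.log (1 + Real.exp (2 * x) / ν) + Real.log c) := by
    funext x
    have hb : (0:ℝ) < 1 + (Real.exp x) ^ 2 / ν := by positivity
    rw [Real.log_mul hc.ne' (Real.rpow_pos_of_pos hb _).ne', Real.log_rpow hb]
    have : (Real.exp x) ^ 2 = Real.exp (2 * x) := by
      rw [← Real.exp_nat_mul]; norm_num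
    rw [this]; ring
  rw [heq]
  exact h1.add_const _
end

section
/- Less precise implies mean-preserving spread (footnote claim). Let f and g be quasi-concave densities symmetric about 0 (hence both have mean 0), and suppose g is less precise than f. Let F(t) := ∫_{−∞}^t f(u) du and G(t) := ∫_{−∞}^t g(u) du be their cumulative distribution functions. Then for every t ∈ ℝ, ∫_{−∞}^t (G(u) − F(u)) du ≥ 0; that is, g dominates f in the convex order (g is a mean-preserving spread of f). -/
open MeasureTheory Real Set

noncomputable section

/-- Footnote claim: less precise implies mean-preserving spread (convex order). -/
theorem lessPrecise_implies_mean_preserving_spread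
    (f g : ℝ → ℝ)
    (hf : IsDensity f) (hfsym : SymmAbout 0 f) (hfqc : QuasiConcaveFn f)
    (hg : IsDensity g) (hgsym : SymmAbout 0 g) (hgqc : QuasiConcaveFn g)
    (hprec : LessPrecise g f) :
    ∀ t : ℝ,
      0 ≤ ∫ u in Set.Iic t,
        ((∫ v in Set.Iic u, g v) - (∫ v in Set.Iic u, f v)) := by
  obtain ⟨hfpos, hfc, hfint1, hfmom⟩ := hf
  obtain ⟨hgpos, hgc, hgint1, hgmom⟩ := hg
  have hfi : Integrable f := by
    by_contra h; rw [integral_undef h] at hfint1; norm_num at hfint1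
  have hgi : Integrable g := by
    by_contra h; rw [integral_undef h] at hgint1; norm_num at hgint1
  have hfeven : ∀ x, f (-x) = f x := fun x => by
    have := hfsym x; simp only [zero_add, zero_sub] at this; exact this.symm
  have hgeven : ∀ x, g (-x) = g x := fun x => by
    have := hgsym x; simp only [zero_add, zero_sub] at this; exact this.symm
  have symF : ∀ u : ℝ, (∫ v in Iic u, f v) = ∫ v in Ioi (-u), f v := by
    intro u
    rw [← integral_comp_neg_Iic u f]
    simp only [hfeven]
  have symG : ∀ u : ℝ, (∫ v in Iic u, g v) = ∫ v in Ioi (-u), g v := by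
    intro u
    rw [← integral_comp_neg_Iic u g]
    simp only [hgeven]
  have hFadd : ∀ u : ℝ, (∫ v in Iic u, f v) + (∫ v in Ioi u, f v) = 1 := by
    intro u
    have := integral_add_compl (μ := volume) (measurableSet_Iic (a := u)) hfi (f := f)
    rw [compl_Iic] at this
    rw [this, hfint1]
  have hGadd : ∀ u : ℝ, (∫ v in Iic u, g v) + (∫ v in Ioi u, g v) = 1 := by
    intro u
    have := integral_add_compl (μ := volume) (measurableSet_Iic (a := u)) hgi (f := g)
    rw [compl_Iic] at this
    rw [this, hgint1]
  have halff : (∫ v in Ioi (0:ℝ), f v) = 1/2 := by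
    have h1 := hFadd 0
    have h2 := symF 0
    rw [neg_zero] at h2
    linarith
  have halfg : (∫ v in Ioi (0:ℝ), g v) = 1/2 := by
    have h1 := hGadd 0
    have h2 := symG 0
    rw [neg_zero] at h2
    linarith
  -- tail domination
  have tail : ∀ a : ℝ, 0 ≤ a → (∫ v in Ioi a, f v) ≤ ∫ v in Ioi a, g v := by
    intro a ha
    rcases eq_or_lt_of_le ha with rfl | ha
    · rw [halff, halfg]
    by_cases hcase : ∀ x ∈ Ioi a, f x ≤ g x
    · exact setIntegral_mono_on hfi.integrableOn hgi.integrableOn measurableSet_Ioi hcase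
    · push_neg at hcase
      obtain ⟨b, hb, hfb⟩ := hcase
      have hb' : (0:ℝ) < b := lt_trans ha hb
      have hle : ∀ x ∈ Ioc (0:ℝ) a, g x ≤ f x := by
        intro x hx
        have hmono := hprec (mem_Ioi.2 hx.1) (mem_Ioi.2 hb') (hx.2.trans hb.le)
        have hlt1 : g b / f b < 1 := (div_lt_one (hfpos b)).2 hfb
        have : g x / f x ≤ 1 := le_of_lt (lt_of_le_of_lt hmono hlt1)
        exact (div_le_one (hfpos x)).1 this
      have h1 : (∫ v in Ioc (0:ℝ) a, g v) ≤ ∫ v in Ioc (0:ℝ) a, f v :=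
        setIntegral_mono_on hgi.integrableOn hfi.integrableOn measurableSet_Ioc hle
      have hsplitf : (∫ v in Ioc (0:ℝ) a, f v) + (∫ v in Ioi a, f v) = ∫ v in Ioi (0:ℝ), f v := by
        rw [← setIntegral_union (Ioc_disjoint_Ioi le_rfl) measurableSet_Ioi
          hfi.integrableOn hfi.integrableOn, Ioc_union_Ioi_eq_Ioi ha.le]
      have hsplitg : (∫ v in Ioc (0:ℝ) a, g v) + (∫ v in Ioi a, g v) = ∫ v in Ioi (0:ℝ), g v := by
        rw [← setIntegral_union (Ioc_disjoint_Ioi le_rfl) measurableSet_Ioi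
          hgi.integrableOn hgi.integrableOn, Ioc_union_Ioi_eq_Ioi ha.le]
      rw [halff] at hsplitf
      rw [halfg] at hsplitg
      linarith
  have key : ∀ u : ℝ, u ≤ 0 → (∫ v in Iic u, f v) ≤ ∫ v in Iic u, g v := by
    intro u hu
    rw [symF, symG]
    exact tail (-u) (by linarith)
  have hodd : ∀ u : ℝ, ((∫ v in Iic (-u), g v) - ∫ v in Iic (-u), f v)
      = -((∫ v in Iic u, g v) - ∫ v in Iic u, f v) := by
    intro u
    have h1 := symG (-u)
    have h2 := symF (-u)
    rw [neg_neg] at h1 h2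
    have h3 := hGadd u
    have h4 := hFadd u
    linarith
  intro t
  rcases le_or_gt t 0 with ht | ht
  · apply setIntegral_nonneg measurableSet_Iic
    intro u hu
    have := key u (le_trans hu ht)
    linarith
  · set φ : ℝ → ℝ := fun u => (∫ v in Iic u, g v) - ∫ v in Iic u, f v with hφ
    by_cases hint : IntegrableOn φ (Iic t)
    · have hsub : Iic (-t) ∪ Ioc (-t) t = Iic t := Iic_union_Ioc_eq_Iic (by linarith)
      have hi1 : IntegrableOn φ (Iic (-t)) :=
        hint.mono_set (by rw [← hsub]; exact subset_union_left)
      have hi2 : IntegrableOn φ (Ioc (-t) t) :=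
        hint.mono_set (by rw [← hsub]; exact subset_union_right)
      have hsplit : (∫ u in Iic t, φ u)
          = (∫ u in Iic (-t), φ u) + ∫ u in Ioc (-t) t, φ u := by
        rw [← hsub, setIntegral_union (Iic_disjoint_Ioc le_rfl) measurableSet_Ioc hi1 hi2]
      have h1 : 0 ≤ ∫ u in Iic (-t), φ u := by
        apply setIntegral_nonneg measurableSet_Iic
        intro u hu
        have := key u (le_trans hu (by linarith))
        simp only [hφ]
        linarith
      have h2 : (∫ u in Ioc (-t) t, φ u) = 0 := by
        have hIoc : (∫ u in Ioc (-t) t, φ u) = ∫ u in (-t)..t, φ u :=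
          (intervalIntegral.integral_of_le (by linarith)).symm
        have hcn : (∫ u in (-t)..t, φ (-u)) = ∫ u in (-t)..t, φ u := by
          rw [intervalIntegral.integral_comp_neg, neg_neg]
        have hneg : (∫ u in (-t)..t, φ (-u)) = -∫ u in (-t)..t, φ u := by
          have hodd' : ∀ u : ℝ, φ (-u) = -φ u := fun u => hodd u
          simp_rw [hodd']
          exact intervalIntegral.integral_neg
        rw [hIoc]
        linarith [hcn, hneg]
      rw [hsplit, h2]
      linarith
    · rw [integral_undef hint]
end
end

section
/- Precision order does not follow from adding bounded independent noise to a Cauchy (counterexample). Define R : ℝ → ℝ by R(x) := (1 + x²)·(arctan(x+1) − arctan(x−1)). Then R is not nondecreasing on (0,∞): there exist 0 < x < y with R(x) > R(y). Consequently, the density h(x) = (1/(2π))·(arctan(x+1) − arctan(x−1)) of the sum of a standard Cauchy random variable and an independent uniform random variable on [−1,1] is not less precise than the standard Cauchy density c(x) = 1/(π(1+x²)), since h(x)/c(x) = R(x)/2 is not nondecreasing on (0,∞). -/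
open Real

lemma arctan_lt_self_aux {t : ℝ} (ht : 0 < t) : Real.arctan t < t := by
  have h1 : 0 < Real.arctan t := by
    rw [← Real.arctan_zero]
    exact Real.arctan_strictMono ht
  have h2 : Real.arctan t < π / 2 := Real.arctan_lt_pi_div_two t
  have := Real.lt_tan h1 h2
  rwa [Real.tan_arctan] at this

lemma key_ineq :
    (1 + (4:ℝ) ^ 2) * (Real.arctan (4 + 1) - Real.arctan (4 - 1)) <
      (1 + (2:ℝ) ^ 2) * (Real.arctan (2 + 1) - Real.arctan (2 - 1)) := by
  have h5 : Real.arctan 5 = Real.arctan 3 + Real.arctan (1/8) := by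
    rw [Real.arctan_add (by norm_num)]; norm_num
  have h3 : Real.arctan 3 = Real.arctan 1 + Real.arctan (1/2) := by
    rw [Real.arctan_add (by norm_num)]; norm_num
  have hsum : Real.arctan (1/2) + Real.arctan (1/3) = π / 4 := by
    rw [Real.arctan_add (by norm_num)]; norm_num
  have hb : Real.arctan (1/8 : ℝ) < 1/8 := arctan_lt_self_aux (by norm_num)
  have hc : Real.arctan (1/3 : ℝ) < 1/3 := arctan_lt_self_aux (by norm_num)
  have hpi : (3.141592 : ℝ) < π := Real.pi_gt_d6
  have e1 : ((4:ℝ) + 1) = 5 := by norm_num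
  have e2 : ((4:ℝ) - 1) = 3 := by norm_num
  have e3 : ((2:ℝ) + 1) = 3 := by norm_num
  have e4 : ((2:ℝ) - 1) = 1 := by norm_num
  rw [e1, e2, e3, e4, h5, h3]
  nlinarith [hsum, hb, hc, hpi]

/-- Counterexample: the Cauchy-plus-uniform density is not less precise than the
standard Cauchy density. -/
theorem cauchy_uniform_not_lessPrecise :
    (∃ x y : ℝ, 0 < x ∧ x < y ∧
      (1 + y ^ 2) * (Real.arctan (y + 1) - Real.arctan (y - 1)) <
        (1 + x ^ 2) * (Real.arctan (x + 1) - Real.arctan (x - 1))) ∧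
    ¬ MonotoneOn
        (fun x : ℝ =>
          (1 / (2 * Real.pi) * (Real.arctan (x + 1) - Real.arctan (x - 1))) /
            (1 / (Real.pi * (1 + x ^ 2))))
        (Set.Ioi 0) := by
  constructor
  · exact ⟨2, 4, by norm_num, by norm_num, key_ineq⟩
  · intro hmono
    have h24 := hmono (by norm_num : (2:ℝ) ∈ Set.Ioi 0)
      (by norm_num : (4:ℝ) ∈ Set.Ioi 0) (by norm_num)
    have hpi : (0:ℝ) < π := Real.pi_pos
    have key := key_ineq
    have simp2 : ∀ x : ℝ,
        (1 / (2 * π) * (Real.arctan (x + 1) - Real.arctan (x - 1))) /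
          (1 / (π * (1 + x ^ 2))) =
        (1 + x ^ 2) * (Real.arctan (x + 1) - Real.arctan (x - 1)) / 2 := by
      intro x
      have hx : (0:ℝ) < 1 + x ^ 2 := by positivity
      field_simp
    simp only [simp2] at h24
    norm_num at h24 key
    linarith
end
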